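/- arXiv:hep-th/0406190 — 5 statements merged into one kernel-verified Lean document; each statement's English description precedes it below -/
import Mathlib

section
/- Assume M ≥ 2, sinh η ≠ 0, and that the chain is homogeneous, ξa = η/2 for all a. Let H = Σ_{m=1}^{M} (σ^x_m σ^x_{m+1} + σ^y_m σ^y_{m+1} + cosh η (σ^z_m σ^z_{m+1} − 1)) with periodic boundary conditions σ^α_{M+1} = σ^α_1, where σ^α_m acts as the Pauli matrix σ^α on the m-th tensor factor of H = (ℂ²)^{⊗M}. Then the transfer matrix 𝒯(η/2) is invertible, and there exists a constant c ∈ ℂ such that H = 2 sinh η · 𝒯′(η/2) ∘ 𝒯(η/2)^{-1} + c·Id_H, where 𝒯′ denotes the (entrywise) derivative of the map λ ↦ 𝒯(λ). -/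
open Complex Matrix BigOperators

noncomputable section

/-- Spin configurations of an `M`-site chain: the index set of the basis of `H = (ℂ²)^{⊗M}`. -/
abbrev Spins (M : ℕ) := Fin M → Fin 2

/-- The XXZ R-matrix `R(λ)` on `ℂ² ⊗ ℂ²` (with anisotropy parameter `η`). -/
def Rmat (η lam : ℂ) : Matrix (Fin 2 × Fin 2) (Fin 2 × Fin 2) ℂ :=
  fun p q =>
    if p = q then (if p.1 = p.2 then Complex.sinh (lam + η) else Complex.sinh lam)
    else if p.1 = q.2 ∧ p.2 = q.1 then Complex.sinh η else 0

/-- The L-operator `L_m(λ) = R_{0m}(λ - ξ_m)` acting on `ℂ² ⊗ H`. -/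
def Lop (M : ℕ) (η : ℂ) (ξ : Fin M → ℂ) (m : Fin M) (lam : ℂ) :
    Matrix (Fin 2 × Spins M) (Fin 2 × Spins M) ℂ :=
  fun p q => Rmat η (lam - ξ m) (p.1, p.2 m) (q.1, q.2 m) *
    (if ∀ k, k ≠ m → p.2 k = q.2 k then 1 else 0)

/-- The monodromy matrix `T(λ) = L_M(λ) ⋯ L_2(λ) L_1(λ)` on `ℂ² ⊗ H`. -/
def Tmono (M : ℕ) (η : ℂ) (ξ : Fin M → ℂ) (lam : ℂ) :
    Matrix (Fin 2 × Spins M) (Fin 2 × Spins M) ℂ :=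
  ((List.ofFn (fun m : Fin M => Lop M η ξ m lam)).reverse).prod

/-- The operator `A(λ)` on `H`. -/
def Aop (M : ℕ) (η : ℂ) (ξ : Fin M → ℂ) (lam : ℂ) : Matrix (Spins M) (Spins M) ℂ :=
  fun s t => Tmono M η ξ lam (0, s) (0, t)

/-- The operator `B(λ)` on `H`. -/
def Bop (M : ℕ) (η : ℂ) (ξ : Fin M → ℂ) (lam : ℂ) : Matrix (Spins M) (Spins M) ℂ :=
  fun s t => Tmono M η ξ lam (0, s) (1, t)

/-- The operator `C(λ)` on `H`. -/
def Cop (M : ℕ) (η : ℂ) (ξ : Fin M → ℂ) (lam : ℂ) : Matrix (Spins M) (Spins M) ℂ :=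
  fun s t => Tmono M η ξ lam (1, s) (0, t)

/-- The operator `D(λ)` on `H`. -/
def Dop (M : ℕ) (η : ℂ) (ξ : Fin M → ℂ) (lam : ℂ) : Matrix (Spins M) (Spins M) ℂ :=
  fun s t => Tmono M η ξ lam (1, s) (1, t)

/-- The twisted transfer matrix `𝒯_κ(μ) = A(μ) + κ D(μ)`. -/
def transferK (M : ℕ) (η : ℂ) (ξ : Fin M → ℂ) (κ : ℂ) (μ : ℂ) : Matrix (Spins M) (Spins M) ℂ :=
  Aop M η ξ μ + κ • Dop M η ξ μ

/-- The transfer matrix `𝒯(μ) = A(μ) + D(μ)`. -/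
def transfer (M : ℕ) (η : ℂ) (ξ : Fin M → ℂ) (μ : ℂ) : Matrix (Spins M) (Spins M) ℂ :=
  transferK M η ξ 1 μ

/-- The reference state `|0⟩` with all spins up. -/
def vac (M : ℕ) : Spins M → ℂ := fun s => if s = fun _ => (0 : Fin 2) then 1 else 0

/-- `⟨0| X |0⟩`. -/
def expectVac {M : ℕ} (X : Matrix (Spins M) (Spins M) ℂ) : ℂ :=
  dotProduct (vac M) (X.mulVec (vac M))

/-- `B(λ_1) ⋯ B(λ_N)`. -/
def Bprod (M : ℕ) (η : ℂ) (ξ : Fin M → ℂ) {N : ℕ} (lam : Fin N → ℂ) :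
    Matrix (Spins M) (Spins M) ℂ :=
  (List.ofFn (fun j : Fin N => Bop M η ξ (lam j))).prod

/-- `C(λ_1) ⋯ C(λ_N)`. -/
def Cprod (M : ℕ) (η : ℂ) (ξ : Fin M → ℂ) {N : ℕ} (lam : Fin N → ℂ) :
    Matrix (Spins M) (Spins M) ℂ :=
  (List.ofFn (fun j : Fin N => Cop M η ξ (lam j))).prod

/-- `a(λ) = ∏_a sinh(λ - ξ_a + η)`. -/
def aF (M : ℕ) (η : ℂ) (ξ : Fin M → ℂ) (lam : ℂ) : ℂ := ∏ a, Complex.sinh (lam - ξ a + η)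

/-- `d(λ) = ∏_a sinh(λ - ξ_a)`. -/
def dF (M : ℕ) (ξ : Fin M → ℂ) (lam : ℂ) : ℂ := ∏ a, Complex.sinh (lam - ξ a)

/-- `Y_κ(μ|{λ})`. -/
def Yk (M : ℕ) (η : ℂ) (ξ : Fin M → ℂ) (κ : ℂ) {N : ℕ} (lam : Fin N → ℂ) (μ : ℂ) : ℂ :=
  aF M η ξ μ * ∏ k, Complex.sinh (lam k - μ + η) +
    κ * dF M ξ μ * ∏ k, Complex.sinh (lam k - μ - η)

/-- `Y_κ(λ_j|{λ})` regarded as a function of all the variables `λ_1, …, λ_N`. -/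
def YFull (M : ℕ) (η : ℂ) (ξ : Fin M → ℂ) (κ : ℂ) {N : ℕ} (v : Fin N → ℂ) (j : Fin N) : ℂ :=
  Yk M η ξ κ v (v j)

/-- The eigenvalue `τ_κ(μ|{λ})` of the twisted transfer matrix. -/
def tauK (M : ℕ) (η : ℂ) (ξ : Fin M → ℂ) (κ : ℂ) {N : ℕ} (lam : Fin N → ℂ) (μ : ℂ) : ℂ :=
  aF M η ξ μ * ∏ k, (Complex.sinh (lam k - μ + η) / Complex.sinh (lam k - μ)) +
    κ * dF M ξ μ * ∏ k, (Complex.sinh (μ - lam k + η) / Complex.sinh (μ - lam k))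

/-- `t(λ,μ) = sinh η / (sinh(λ-μ) sinh(λ-μ+η))`. -/
def tfun (η lam μ : ℂ) : ℂ :=
  Complex.sinh η / (Complex.sinh (lam - μ) * Complex.sinh (lam - μ + η))

/-- The matrix `Ω_κ({λ},{μ}|{ν})`. -/
def Omega (M : ℕ) (η : ℂ) (ξ : Fin M → ℂ) (κ : ℂ) {n n' : ℕ}
    (lam : Fin n → ℂ) (mu : Fin n → ℂ) (nu : Fin n' → ℂ) : Matrix (Fin n) (Fin n) ℂ :=
  fun j k =>
    aF M η ξ (mu k) * tfun η (lam j) (mu k) * ∏ a, Complex.sinh (nu a - mu k + η) -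
      κ * dF M ξ (mu k) * tfun η (mu k) (lam j) * ∏ a, Complex.sinh (nu a - mu k - η)

/-- Pauli matrix `σ^x`. -/
def sigmaX : Matrix (Fin 2) (Fin 2) ℂ := !![0, 1; 1, 0]
/-- Pauli matrix `σ^y`. -/
def sigmaY : Matrix (Fin 2) (Fin 2) ℂ := !![0, -Complex.I; Complex.I, 0]
/-- Pauli matrix `σ^z`. -/
def sigmaZ : Matrix (Fin 2) (Fin 2) ℂ := !![1, 0; 0, -1]

/-- The local operator acting as `P` on the `m`-th site and as identity elsewhere. -/
def pauliAt (M : ℕ) (P : Matrix (Fin 2) (Fin 2) ℂ) (m : Fin M) : Matrix (Spins M) (Spins M) ℂ :=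
  fun s t => P (s m) (t m) * (if ∀ k, k ≠ m → s k = t k then 1 else 0)

/-- The generating operator `Q^κ_{i,m} = ∏_{n=i}^{m} ((1+κ)/2 + ((1-κ)/2) σ^z_n)`
(sites are 1-based: site `n` is the tensor factor of index `n-1`). -/
def Qop (M : ℕ) (κ : ℂ) (i m : ℕ) : Matrix (Spins M) (Spins M) ℂ :=
  (((Finset.univ.filter (fun n : Fin M => i ≤ n.val + 1 ∧ n.val + 1 ≤ m)).sort (· ≤ ·)).map
    (fun n => ((1 + κ)/2) • (1 : Matrix (Spins M) (Spins M) ℂ) +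
      ((1 - κ)/2) • pauliAt M sigmaZ n)).prod

/-- Cyclic successor on `Fin M`. -/
def cyc {M : ℕ} (m : Fin M) : Fin M := ⟨(m.val + 1) % M, Nat.mod_lt _ m.pos⟩


/-- The XXZ Hamiltonian (at `h = 0`) with periodic boundary conditions and `Δ = cosh η`. -/
def Ham (M : ℕ) (η : ℂ) : Matrix (Spins M) (Spins M) ℂ :=
  ∑ m : Fin M,
    (pauliAt M sigmaX m * pauliAt M sigmaX (cyc m) +
     pauliAt M sigmaY m * pauliAt M sigmaY (cyc m) +
     Complex.cosh η • (pauliAt M sigmaZ m * pauliAt M sigmaZ (cyc m) - 1))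


/-! ### Auxiliary machinery for the trace identity -/

section AuxTrace

/-- Fold producing `g (n-1) * ⋯ * g 1 * g 0`. -/
def pfold {α : Type*} [Monoid α] (g : ℕ → α) : ℕ → α
  | 0 => 1
  | n + 1 => g n * pfold g n

lemma ofFn_reverse_prod {α : Type*} [Monoid α] :
    ∀ (N : ℕ) (f : Fin N → α) (g : ℕ → α), (∀ i : Fin N, f i = g i.val) →
      (List.ofFn f).reverse.prod = pfold g N := by
  intro N
  induction N with
  | zero => intro f g h; simp [pfold]
  | succ n ih =>
      intro f g h
      rw [List.ofFn_succ', List.concat_eq_append, List.reverse_append]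
      simp only [List.reverse_singleton, List.singleton_append, List.prod_cons]
      rw [ih (fun i => f i.castSucc) g (fun i => (h i.castSucc).trans rfl), h (Fin.last n)]
      rfl

variable {M : ℕ}

/-- Mod-`M` index. -/
def idx (M : ℕ) [NeZero M] (j : ℕ) : Fin M :=
  ⟨j % M, Nat.mod_lt _ (Nat.pos_of_ne_zero (NeZero.ne M))⟩

lemma idx_val_of_lt [NeZero M] {j : ℕ} (h : j < M) : (idx M j).val = j := Nat.mod_eq_of_lt h

lemma cyc_val_of_lt {k : Fin M} (h : k.val + 1 < M) : (cyc k).val = k.val + 1 :=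
  Nat.mod_eq_of_lt h

lemma cyc_val_last {k : Fin M} (h : k.val + 1 = M) : (cyc k).val = 0 := by
  simp [cyc, h]

/-- one-site swap matrix between auxiliary space and site `m`. -/
def Smat (M : ℕ) (m : Fin M) : Matrix (Fin 2 × Spins M) (Fin 2 × Spins M) ℂ :=
  fun p q => if p.1 = q.2 m ∧ p.2 m = q.1 ∧ ∀ k, k ≠ m → p.2 k = q.2 k then 1 else 0

def SmatN (M n : ℕ) : Matrix (Fin 2 × Spins M) (Fin 2 × Spins M) ℂ :=
  if h : n < M then Smat M ⟨n, h⟩ else 1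

/-- Derivative of the L-operator at `λ = η/2` (homogeneous chain). -/
def Ldm (M : ℕ) (η : ℂ) (m : Fin M) : Matrix (Fin 2 × Spins M) (Fin 2 × Spins M) ℂ :=
  fun p q => if p = q then (if p.1 = p.2 m then Complex.cosh η else 1) else 0

def LdN (M : ℕ) (η : ℂ) (n : ℕ) : Matrix (Fin 2 × Spins M) (Fin 2 × Spins M) ℂ :=
  if h : n < M then Ldm M η ⟨n, h⟩ else 0

def LopN (M : ℕ) (η : ℂ) (ξ : Fin M → ℂ) (n : ℕ) (lam : ℂ) :
    Matrix (Fin 2 × Spins M) (Fin 2 × Spins M) ℂ :=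
  if h : n < M then Lop M η ξ ⟨n, h⟩ lam else 1

def Pfun (M : ℕ) (η : ℂ) (ξ : Fin M → ℂ) (lam : ℂ) : ℕ → Matrix (Fin 2 × Spins M) (Fin 2 × Spins M) ℂ :=
  pfold (fun n => LopN M η ξ n lam)

def winP (M i : ℕ) : ℕ → Matrix (Fin 2 × Spins M) (Fin 2 × Spins M) ℂ :=
  pfold (fun n => if i ≤ n then SmatN M n else 1)

lemma Tmono_eq_Pfun (M : ℕ) (η : ℂ) (ξ : Fin M → ℂ) (lam : ℂ) :
    Tmono M η ξ lam = Pfun M η ξ lam M := by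
  apply ofFn_reverse_prod
  intro i
  simp [LopN, i.isLt]

lemma Rmat_zero (η : ℂ) (x y : Fin 2 × Fin 2) :
    Rmat η 0 x y = Complex.sinh η * (if x.1 = y.2 ∧ x.2 = y.1 then 1 else 0) := by
  unfold Rmat
  split_ifs with h1 h2 h3 <;> simp_all

lemma hasDerivAt_Rmat (η : ℂ) (x y : Fin 2 × Fin 2) :
    HasDerivAt (fun lam => Rmat η (lam - η / 2) x y)
      (if x = y then (if x.1 = x.2 then Complex.cosh η else 1) else 0) (η / 2) := by
  unfold Rmat
  have hbase : HasDerivAt (fun lam : ℂ => lam - η / 2) 1 (η / 2) :=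
    (hasDerivAt_id _).sub_const _
  split_ifs with h1 h2 h3
  · simpa using (hbase.add_const η).csinh
  · simpa using hbase.csinh
  · exact hasDerivAt_const _ _
  · exact hasDerivAt_const _ _


lemma winP_refl {i : ℕ} : ∀ {n : ℕ}, n ≤ i → winP M i n = 1 := by
  intro n
  induction n with
  | zero => intro _; rfl
  | succ k ih =>
      intro h
      show (if i ≤ k then SmatN M k else 1) * winP M i k = 1
      rw [if_neg (by omega), ih (by omega), one_mul]

lemma winP_succ_of_le {i n : ℕ} (h : i ≤ n) :
    winP M i (n + 1) = SmatN M n * winP M i n := by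
  show (if i ≤ n then SmatN M n else 1) * winP M i n = _
  rw [if_pos h]

lemma Pfun_succ (η : ℂ) (ξ : Fin M → ℂ) (lam : ℂ) (n : ℕ) :
    Pfun M η ξ lam (n + 1) = LopN M η ξ n lam * Pfun M η ξ lam n := rfl

lemma LopN_val (η : ℂ) {n : ℕ} (h : n < M) :
    LopN M η (fun _ => η / 2) n (η / 2) = Complex.sinh η • SmatN M n := by
  rw [LopN, SmatN, dif_pos h, dif_pos h]
  ext p q
  simp only [Lop, Matrix.smul_apply, Smat, smul_eq_mul]
  rw [show (η / 2 - η / 2 : ℂ) = 0 by ring, Rmat_zero]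
  by_cases hA : p.1 = q.2 ⟨n, h⟩ <;> by_cases hB : p.2 ⟨n, h⟩ = q.1 <;>
    by_cases hC : ∀ k, k ≠ ⟨n, h⟩ → p.2 k = q.2 k <;>
    simp [hA, hB, hC]

lemma hasDerivAt_LopN (η : ℂ) (n : ℕ) (p q : Fin 2 × Spins M) :
    HasDerivAt (fun lam => LopN M η (fun _ => η / 2) n lam p q) (LdN M η n p q) (η / 2) := by
  by_cases h : n < M
  · simp only [LopN, LdN, dif_pos h]
    set m : Fin M := ⟨n, h⟩
    have hχ : (fun lam => Lop M η (fun _ => η / 2) m lam p q) =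
        fun lam => Rmat η (lam - η / 2) (p.1, p.2 m) (q.1, q.2 m) *
          (if ∀ k, k ≠ m → p.2 k = q.2 k then 1 else 0) := rfl
    rw [hχ]
    have := (hasDerivAt_Rmat η (p.1, p.2 m) (q.1, q.2 m)).mul_const
      (if ∀ k, k ≠ m → p.2 k = q.2 k then (1 : ℂ) else 0)
    refine this.congr_deriv ?_
    symm
    by_cases hpq : p = q
    · subst hpq
      simp [Ldm]
    · rw [Ldm, if_neg hpq]
      by_cases hx : (p.1, p.2 m) = (q.1, q.2 m)
      · by_cases hC : ∀ k, k ≠ m → p.2 k = q.2 k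
        · exfalso
          apply hpq
          obtain ⟨h1, h2⟩ := Prod.mk.inj hx
          refine Prod.ext h1 (funext fun k => ?_)
          by_cases hk : k = m
          · rw [hk]; exact h2
          · exact hC k hk
        · simp [hC]
      · simp [hx]
  · simp only [LopN, LdN, dif_neg h]
    simpa using hasDerivAt_const (η / 2) ((1 : Matrix (Fin 2 × Spins M) (Fin 2 × Spins M) ℂ) p q)

lemma Pfun_val (η : ℂ) : ∀ {n : ℕ}, n ≤ M →
    Pfun M η (fun _ => η / 2) (η / 2) n = Complex.sinh η ^ n • winP M 0 n := by
  intro n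
  induction n with
  | zero => intro _; simp [Pfun, pfold, winP]
  | succ k ih =>
      intro h
      rw [Pfun_succ, LopN_val η (by omega), ih (by omega),
        winP_succ_of_le (Nat.zero_le k), smul_mul_assoc, mul_smul_comm, smul_smul,
        ← pow_succ']

/-- the derivative of the partial monodromy products at `η/2`. -/
def Dmat (M : ℕ) (η : ℂ) (n : ℕ) : Matrix (Fin 2 × Spins M) (Fin 2 × Spins M) ℂ :=
  ∑ m ∈ Finset.range n,
    (Complex.sinh η ^ (n - m - 1) • winP M (m + 1) n) * LdN M η m *
      (Complex.sinh η ^ m • winP M 0 m)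

lemma hasDerivAt_Pfun (η : ℂ) : ∀ {n : ℕ}, n ≤ M → ∀ (p q : Fin 2 × Spins M),
    HasDerivAt (fun lam => Pfun M η (fun _ => η / 2) lam n p q) (Dmat M η n p q) (η / 2) := by
  intro n
  induction n with
  | zero =>
      intro _ p q
      exact (hasDerivAt_const (η / 2)
        ((1 : Matrix (Fin 2 × Spins M) (Fin 2 × Spins M) ℂ) p q)).congr_deriv (by simp [Dmat])
  | succ k ih =>
      intro h p q
      have hstep : (fun lam => Pfun M η (fun _ => η / 2) lam (k + 1) p q) =
          fun lam => ∑ j, LopN M η (fun _ => η / 2) k lam p j *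
            Pfun M η (fun _ => η / 2) lam k j q := by
        funext lam
        rw [Pfun_succ, Matrix.mul_apply]
      rw [hstep]
      have hD := HasDerivAt.fun_sum (fun j (_ : j ∈ (Finset.univ : Finset (Fin 2 × Spins M))) =>
        (hasDerivAt_LopN η k p j).fun_mul (ih (by omega) j q))
      have hsum : ∑ m ∈ Finset.range k,
          (Complex.sinh η ^ (k + 1 - m - 1) • winP M (m + 1) (k + 1)) * LdN M η m *
            (Complex.sinh η ^ m • winP M 0 m)
          = (Complex.sinh η • SmatN M k) * Dmat M η k := by
        rw [Dmat, Finset.mul_sum]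
        refine Finset.sum_congr rfl fun m hm => ?_
        have hmk : m < k := Finset.mem_range.mp hm
        rw [winP_succ_of_le (by omega)]
        have h1 : k + 1 - m - 1 = (k - m - 1) + 1 := by omega
        rw [h1, pow_succ']
        simp only [smul_mul_assoc, mul_smul_comm, smul_smul, mul_assoc]
        congr 1
        ring
      have hkey : Dmat M η (k + 1) =
          LdN M η k * (Complex.sinh η ^ k • winP M 0 k) +
            LopN M η (fun _ => η / 2) k (η / 2) * Dmat M η k := by
        rw [Dmat, Finset.sum_range_succ, hsum, LopN_val η (by omega)]
        have h0 : k + 1 - k - 1 = 0 := by omega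
        rw [h0, pow_zero, winP_refl le_rfl, one_smul, one_mul, add_comm]
      refine hD.congr_deriv ?_
      symm
      rw [hkey, Matrix.add_apply, Matrix.mul_apply, Matrix.mul_apply,
        ← Finset.sum_add_distrib]
      refine Finset.sum_congr rfl fun j _ => ?_
      rw [Pfun_val η (by omega)]

lemma Smat_eq_ite (m : Fin M) (p q : Fin 2 × Spins M) :
    Smat M m p q = if q = (p.2 m, Function.update p.2 m p.1) then 1 else 0 := by
  rw [Smat]
  refine if_congr ?_ rfl rfl
  constructor
  · rintro ⟨h1, h2, h3⟩
    refine Prod.ext h2.symm (funext fun k => ?_)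
    show q.2 k = Function.update p.2 m p.1 k
    by_cases hk : k = m
    · subst hk; rw [Function.update_self]; exact h1.symm
    · rw [Function.update_of_ne hk]; exact (h3 k hk).symm
  · rintro rfl
    refine ⟨?_, rfl, fun k hk => ?_⟩
    · show p.1 = Function.update p.2 m p.1 m
      rw [Function.update_self]
    · show p.2 k = Function.update p.2 m p.1 k
      rw [Function.update_of_ne hk]

lemma Smat_mul_apply (m : Fin M) (W : Matrix (Fin 2 × Spins M) (Fin 2 × Spins M) ℂ)
    (a : Fin 2) (s : Spins M) (r : Fin 2 × Spins M) :
    (Smat M m * W) (a, s) r = W (s m, Function.update s m a) r := by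
  rw [Matrix.mul_apply]
  simp only [Smat_eq_ite, ite_mul, one_mul, zero_mul]
  rw [Finset.sum_ite_eq' Finset.univ ((a, s).2 m, Function.update (a, s).2 m (a, s).1)
    (fun q => W q r)]
  simp

lemma winP_apply_row [NeZero M] : ∀ (n i : ℕ), i ≤ n → n ≤ M → ∀ (a b : Fin 2) (s t : Spins M),
    winP M i n (a, s) (b, t) =
      if (a = (if n = i then b else t (idx M (n - 1))) ∧
          ∀ k : Fin M, s k = (if i ≤ k.val ∧ k.val < n
            then (if k.val = i then b else t (idx M (k.val - 1))) else t k)) then 1 else 0 := by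
  intro n
  induction n with
  | zero =>
      intro i hi _ a b s t
      obtain rfl : i = 0 := by omega
      show (1 : Matrix (Fin 2 × Spins M) (Fin 2 × Spins M) ℂ) (a, s) (b, t) = _
      rw [Matrix.one_apply]
      refine if_congr ?_ rfl rfl
      constructor
      · intro h
        obtain ⟨h1, h2⟩ := Prod.mk.inj h
        exact ⟨by simpa using h1, fun k => by rw [if_neg (by omega)]; exact congrFun h2 k⟩
      · rintro ⟨h1, h2⟩
        have h1' : a = b := by simpa using h1
        refine Prod.ext h1' (funext fun k => ?_)
        have := h2 k
        rwa [if_neg (by omega)] at this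
  | succ n ihn =>
      intro i hi hn1 a b s t
      by_cases hie : i = n + 1
      · subst hie
        rw [winP_refl le_rfl, Matrix.one_apply]
        refine if_congr ?_ rfl rfl
        constructor
        · intro h
          obtain ⟨h1, h2⟩ := Prod.mk.inj h
          exact ⟨by simp [h1], fun k => by rw [if_neg (by omega)]; exact congrFun h2 k⟩
        · rintro ⟨h1, h2⟩
          have h1' : a = b := by simpa using h1
          refine Prod.ext h1' (funext fun k => ?_)
          have := h2 k
          rwa [if_neg (by omega)] at this
      · have hin : i ≤ n := by omega
        have hnM : n < M := by omega
        rw [winP_succ_of_le hin, SmatN, dif_pos hnM, Smat_mul_apply,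
          ihn i hin (by omega)]
        refine if_congr ?_ rfl rfl
        have hval : ((⟨n, hnM⟩ : Fin M)).val = n := rfl
        have hidxn : idx M n = ⟨n, hnM⟩ := Fin.ext (idx_val_of_lt hnM)
        constructor
        · rintro ⟨h1, h2⟩
          have ha : a = t ⟨n, hnM⟩ := by
            have hk := h2 ⟨n, hnM⟩
            rwa [Function.update_self, if_neg (by simp only [hval]; omega)] at hk
          refine ⟨?_, fun k => ?_⟩
          · rw [if_neg (by omega), show n + 1 - 1 = n from rfl, hidxn]
            exact ha
          · by_cases hkm : k = ⟨n, hnM⟩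
            · subst hkm
              rw [if_pos (by simp only [hval]; omega)]
              simp only [hval]
              exact h1
            · have hkv : k.val ≠ n := fun h' => hkm (Fin.ext h')
              have := h2 k
              rw [Function.update_of_ne hkm] at this
              rw [this]
              exact if_congr (by omega) rfl rfl
        · rintro ⟨h1, h2⟩
          have ha : a = t ⟨n, hnM⟩ := by
            rwa [if_neg (by omega), show n + 1 - 1 = n from rfl, hidxn] at h1
          refine ⟨?_, fun k => ?_⟩
          · have := h2 ⟨n, hnM⟩
            rw [if_pos (by simp only [hval]; omega)] at this
            simp only [hval] at this
            exact this
          · by_cases hkm : k = ⟨n, hnM⟩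
            · subst hkm
              rw [Function.update_self, if_neg (by simp only [hval]; omega)]
              exact ha
            · rw [Function.update_of_ne hkm]
              have hkv : k.val ≠ n := fun h' => hkm (Fin.ext h')
              rw [h2 k]
              exact if_congr (by omega) rfl rfl

lemma winP_apply_col [NeZero M] : ∀ (n i : ℕ), i ≤ n → n ≤ M → ∀ (a b : Fin 2) (s t : Spins M),
    winP M i n (a, s) (b, t) =
      if (b = (if n = i then a else s (idx M i)) ∧
          ∀ k : Fin M, t k = (if i ≤ k.val ∧ k.val < n
            then (if k.val = n - 1 then a else s (idx M (k.val + 1))) else s k)) then 1 else 0 := by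
  intro n
  induction n with
  | zero =>
      intro i hi _ a b s t
      obtain rfl : i = 0 := by omega
      show (1 : Matrix (Fin 2 × Spins M) (Fin 2 × Spins M) ℂ) (a, s) (b, t) = _
      rw [Matrix.one_apply]
      refine if_congr ?_ rfl rfl
      constructor
      · intro h
        obtain ⟨h1, h2⟩ := Prod.mk.inj h
        exact ⟨by simp [h1], fun k => by rw [if_neg (by omega)]; exact (congrFun h2 k).symm⟩
      · rintro ⟨h1, h2⟩
        have h1' : a = b := by simpa using h1.symm
        refine Prod.ext h1' (funext fun k => ?_)
        have := h2 k
        rw [if_neg (by omega)] at this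
        exact this.symm
  | succ n ihn =>
      intro i hi hn1 a b s t
      by_cases hie : i = n + 1
      · subst hie
        rw [winP_refl le_rfl, Matrix.one_apply]
        refine if_congr ?_ rfl rfl
        constructor
        · intro h
          obtain ⟨h1, h2⟩ := Prod.mk.inj h
          exact ⟨by simp [h1], fun k => by rw [if_neg (by omega)]; exact (congrFun h2 k).symm⟩
        · rintro ⟨h1, h2⟩
          have h1' : a = b := by simpa using h1.symm
          refine Prod.ext h1' (funext fun k => ?_)
          have := h2 k
          rw [if_neg (by omega)] at this
          exact this.symm
      · have hin : i ≤ n := by omega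
        have hnM : n < M := by omega
        rw [winP_succ_of_le hin, SmatN, dif_pos hnM, Smat_mul_apply,
          ihn i hin (by omega)]
        refine if_congr (and_congr ?_ (forall_congr' fun k => ?_)) rfl rfl
        · refine iff_of_eq (congrArg (fun z => b = z) ?_)
          by_cases hni : n = i
          · have hidx : idx M i = ⟨n, hnM⟩ :=
              Fin.ext (by rw [idx_val_of_lt (by omega)]; exact hni.symm)
            rw [if_pos hni, if_neg (by omega), hidx]
          · have hne : idx M i ≠ ⟨n, hnM⟩ := by
              intro h
              have hv := congrArg Fin.val h
              rw [idx_val_of_lt (by omega)] at hv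
              exact hni (hv.symm : n = i)
            rw [if_neg hni, if_neg (by omega), Function.update_of_ne hne]
        · refine iff_of_eq (congrArg (fun z => t k = z) ?_)
          simp only [Nat.add_sub_cancel]
          by_cases hkn : k.val = n
          · rw [if_neg (show ¬(i ≤ k.val ∧ k.val < n) by omega),
              if_pos (show i ≤ k.val ∧ k.val < n + 1 by omega), if_pos hkn,
              show k = ⟨n, hnM⟩ from Fin.ext hkn, Function.update_self]
          · by_cases hc : i ≤ k.val ∧ k.val < n
            · by_cases hk1 : k.val = n - 1
              · have hidx : idx M (k.val + 1) = ⟨n, hnM⟩ :=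
                  Fin.ext (by rw [idx_val_of_lt (by omega)]; exact (show k.val + 1 = n by omega))
                rw [if_pos hc, if_pos hk1,
                  if_pos (show i ≤ k.val ∧ k.val < n + 1 by omega), if_neg hkn, hidx]
              · have hne : idx M (k.val + 1) ≠ ⟨n, hnM⟩ := by
                  intro h
                  have hv := congrArg Fin.val h
                  rw [idx_val_of_lt (by omega)] at hv
                  have hv' : k.val + 1 = n := hv
                  exact hk1 (by omega)
                rw [if_pos hc, if_neg hk1,
                  if_pos (show i ≤ k.val ∧ k.val < n + 1 by omega), if_neg hkn,
                  Function.update_of_ne hne]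
            · rw [if_neg hc, if_neg (show ¬(i ≤ k.val ∧ k.val < n + 1) by omega),
                Function.update_of_ne (fun h => hkn (congrArg Fin.val h))]

/-- cyclic shift matrix on the spin chain -/
def Umat (M : ℕ) : Matrix (Spins M) (Spins M) ℂ :=
  fun s t => if ∀ k, t k = s (cyc k) then 1 else 0

def Vmat (M : ℕ) : Matrix (Spins M) (Spins M) ℂ :=
  fun s t => if ∀ k, s k = t (cyc k) then 1 else 0

def cycInv {M : ℕ} (m : Fin M) : Fin M :=
  if m.val = 0 then ⟨M - 1, by have := m.pos; omega⟩ else ⟨m.val - 1, by have := m.isLt; omega⟩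

lemma cyc_cycInv (l : Fin M) : cyc (cycInv l) = l := by
  have hM0 : 0 < M := l.pos
  have hl := l.isLt
  apply Fin.ext
  rw [cycInv]
  split_ifs with h
  · rw [cyc_val_last (show (M - 1) + 1 = M by omega)]
    exact h.symm
  · rw [cyc_val_of_lt (show l.val - 1 + 1 < M by omega)]
    exact (show l.val - 1 + 1 = l.val by omega)

lemma cycInv_cyc (k : Fin M) : cycInv (cyc k) = k := by
  have hk := k.isLt
  apply Fin.ext
  rw [cycInv]
  split_ifs with h
  · by_cases h1 : k.val + 1 = M
    · show M - 1 = k.val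
      omega
    · rw [cyc_val_of_lt (by omega)] at h
      omega
  · by_cases h1 : k.val + 1 = M
    · rw [cyc_val_last h1] at h
      exact absurd rfl h
    · have hcv := cyc_val_of_lt (show k.val + 1 < M by omega)
      exact (show (cyc k).val - 1 = k.val by omega)

lemma Umat_apply_eq (s u : Spins M) :
    Umat M s u = if u = (fun k => s (cyc k)) then 1 else 0 := by
  rw [Umat]
  exact if_congr ⟨fun h => funext h, fun h k => congrFun h k⟩ rfl rfl

lemma Vmat_apply_eq (s u : Spins M) :
    Vmat M s u = if u = (fun j => s (cycInv j)) then 1 else 0 := by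
  rw [Vmat]
  refine if_congr ?_ rfl rfl
  constructor
  · intro h
    funext j
    conv_lhs => rw [← cyc_cycInv j]
    exact (h (cycInv j)).symm
  · rintro rfl k
    show s k = s (cycInv (cyc k))
    rw [cycInv_cyc]

lemma Umat_mul_Vmat : Umat M * Vmat M = 1 := by
  ext s t
  rw [Matrix.mul_apply, Matrix.one_apply]
  simp only [Umat_apply_eq, ite_mul, one_mul, zero_mul]
  rw [Finset.sum_ite_eq' Finset.univ (fun k => s (cyc k)) (fun u => Vmat M u t)]
  simp only [Finset.mem_univ, if_true]
  rw [Vmat]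
  refine if_congr ?_ rfl rfl
  constructor
  · intro h
    funext j
    obtain ⟨k, rfl⟩ : ∃ k, cyc k = j := ⟨cycInv j, cyc_cycInv j⟩
    exact h k
  · rintro rfl
    intro k
    rfl

lemma Vmat_mul_Umat : Vmat M * Umat M = 1 := by
  ext s t
  rw [Matrix.mul_apply, Matrix.one_apply]
  simp only [Vmat_apply_eq, ite_mul, one_mul, zero_mul]
  rw [Finset.sum_ite_eq' Finset.univ (fun j => s (cycInv j)) (fun u => Umat M u t)]
  simp only [Finset.mem_univ, if_true]
  rw [Umat]
  refine if_congr ?_ rfl rfl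
  constructor
  · intro h
    funext k
    have h2 := h k
    rw [cycInv_cyc] at h2
    exact h2.symm
  · rintro rfl
    intro k
    show s k = s (cycInv (cyc k))
    rw [cycInv_cyc]

lemma transfer_eta [NeZero M] (η : ℂ) :
    transfer M η (fun _ => η / 2) (η / 2) = (Complex.sinh η ^ M) • Umat M := by
  have hM0 : 0 < M := Nat.pos_of_ne_zero (NeZero.ne M)
  ext s t
  rw [transfer, transferK, Matrix.add_apply, Matrix.smul_apply, one_smul, Aop, Dop,
    Tmono_eq_Pfun, Pfun_val η le_rfl]
  simp only [Matrix.smul_apply, smul_eq_mul]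
  rw [winP_apply_row M 0 (Nat.zero_le M) le_rfl, winP_apply_row M 0 (Nat.zero_le M) le_rfl,
    Umat]
  rw [← mul_add]
  congr 1
  have hcond : ∀ a : Fin 2,
      ((a = if M = 0 then a else t (idx M (M - 1))) ∧
        ∀ k : Fin M, s k = (if 0 ≤ k.val ∧ k.val < M
          then (if k.val = 0 then a else t (idx M (k.val - 1))) else t k)) ↔
      (a = t (idx M (M - 1)) ∧
        ∀ k : Fin M, s k = (if k.val = 0 then a else t (idx M (k.val - 1)))) := by
    intro a
    rw [if_neg (by omega)]
    refine and_congr Iff.rfl (forall_congr' fun k => ?_)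
    rw [if_pos (show 0 ≤ k.val ∧ k.val < M from ⟨Nat.zero_le _, k.isLt⟩)]
  rw [if_congr (hcond 0) rfl rfl, if_congr (hcond 1) rfl rfl]
  by_cases hU : ∀ k, t k = s (cyc k)
  · have hone : ∀ a : Fin 2,
        (a = t (idx M (M - 1)) ∧
          ∀ k : Fin M, s k = (if k.val = 0 then a else t (idx M (k.val - 1)))) ↔
        a = t (idx M (M - 1)) := by
      intro a
      refine ⟨fun h => h.1, fun h => ⟨h, fun k => ?_⟩⟩
      by_cases hk0 : k.val = 0
      · have hidx : (idx M (M - 1)).val = M - 1 := idx_val_of_lt (by omega)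
        have hcyc : cyc (idx M (M - 1)) = k := by
          apply Fin.ext
          rw [cyc_val_last (by rw [hidx]; omega)]
          omega
        rw [if_pos hk0, h, hU (idx M (M - 1)), hcyc]
      · have hkv := k.isLt
        have hidx : (idx M (k.val - 1)).val = k.val - 1 := idx_val_of_lt (by omega)
        have hcyc : cyc (idx M (k.val - 1)) = k := by
          apply Fin.ext
          rw [cyc_val_of_lt (by rw [hidx]; omega), hidx]
          omega
        rw [if_neg hk0, hU (idx M (k.val - 1)), hcyc]
    rw [if_congr (hone 0) rfl rfl, if_congr (hone 1) rfl rfl, if_pos hU]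
    rcases (show ∀ c : Fin 2, c = 0 ∨ c = 1 by decide) (t (idx M (M - 1))) with hc | hc <;>
      rw [hc] <;> simp
  · have hnone : ∀ a : Fin 2,
        ¬(a = t (idx M (M - 1)) ∧
          ∀ k : Fin M, s k = (if k.val = 0 then a else t (idx M (k.val - 1)))) := by
      intro a ⟨h1, h2⟩
      apply hU
      intro k
      by_cases hk1 : k.val + 1 = M
      · have hc : cyc k = idx M 0 := Fin.ext (by rw [cyc_val_last hk1, idx_val_of_lt hM0])
        have h0 : s (cyc k) = a := by
          have := h2 (cyc k)
          rwa [if_pos (by rw [hc, idx_val_of_lt hM0])] at this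
        rw [h0, h1]
        congr 1
        apply Fin.ext
        rw [idx_val_of_lt (by omega)]
        have := k.isLt
        omega
      · have hkM := k.isLt
        have hcv : (cyc k).val = k.val + 1 := cyc_val_of_lt (by omega)
        have := h2 (cyc k)
        rw [if_neg (by omega)] at this
        have hidx : idx M ((cyc k).val - 1) = k := Fin.ext (by rw [idx_val_of_lt (by omega)]; omega)
        rw [hidx] at this
        exact this.symm
    rw [if_neg (hnone 0), if_neg (hnone 1), if_neg hU, add_zero]

lemma cond_iff [NeZero M] (hM : 2 ≤ M) (m : Fin M) (a : Fin 2) (s t' : Spins M) :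
    ((if M = m.val + 1 then a else s (idx M (m.val + 1))) =
        (if m.val = 0 then a else t' (cyc (idx M (m.val - 1)))) ∧
      ∀ k : Fin M,
        (if m.val + 1 ≤ k.val ∧ k.val < M then (if k.val = M - 1 then a else s (idx M (k.val + 1)))
          else s k) =
        (if k.val < m.val then (if k.val = 0 then a else t' (cyc (idx M (k.val - 1))))
          else t' (cyc k)))
    ↔ ((∀ j, t' j = if j = m then s (cyc m) else if j = cyc m then s m else s j) ∧
        a = (if m.val = 0 then s (cyc m) else s (idx M 0))) := by
  have hmv : m.val < M := m.isLt
  have hidx0 : (idx M 0).val = 0 := idx_val_of_lt (by omega)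
  have hidxj : ∀ j : Fin M, idx M j.val = j := fun j => Fin.ext (idx_val_of_lt j.isLt)
  have hcyc_of_lt : ∀ j : ℕ, j + 1 < M → cyc (idx M j) = idx M (j + 1) := by
    intro j hj
    apply Fin.ext
    have h1 : (idx M j).val = j := idx_val_of_lt (by omega)
    rw [cyc_val_of_lt (by rw [h1]; exact hj), h1, idx_val_of_lt hj]
  have hcyck : ∀ k : Fin M, k.val + 1 < M → cyc k = idx M (k.val + 1) :=
    fun k hk => Fin.ext (by rw [cyc_val_of_lt hk, idx_val_of_lt hk])
  have hcyck_last : ∀ k : Fin M, k.val + 1 = M → cyc k = idx M 0 :=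
    fun k hk => Fin.ext (by rw [cyc_val_last hk, hidx0])
  constructor
  · rintro ⟨h1, h2⟩
    have hFm := h2 m
    rw [if_neg (by omega), if_neg (by omega)] at hFm
    -- hFm : s m = t' (cyc m)
    by_cases hmM : M = m.val + 1
    · -- last site
      have hm1 : 1 ≤ m.val := by omega
      rw [if_pos hmM, if_neg (by omega)] at h1
      have hc1 : cyc (idx M (m.val - 1)) = m := by
        rw [hcyc_of_lt (m.val - 1) (by omega), show m.val - 1 + 1 = m.val by omega, hidxj]
      rw [hc1] at h1
      -- h1 : a = t' m
      have hcm : cyc m = idx M 0 := hcyck_last m (by omega)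
      have hcmv : (cyc m).val = 0 := by rw [hcm, hidx0]
      have hFcm := h2 (cyc m)
      rw [if_neg (by omega), if_pos (by omega), if_pos (by omega)] at hFcm
      -- hFcm : s (cyc m) = a
      refine ⟨fun j => ?_, ?_⟩
      · by_cases hjm : j = m
        · rw [if_pos hjm, hjm, ← h1]
          exact hFcm.symm
        · by_cases hjcm : j = cyc m
          · rw [if_neg hjm, if_pos hjcm, hjcm]
            exact hFm.symm
          · rw [if_neg hjm, if_neg hjcm]
            have hjm' : j.val ≠ m.val := fun h => hjm (Fin.ext h)
            have hjcm' : j.val ≠ 0 := fun h => hjcm (Fin.ext (by rw [h, hcmv]))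
            have hjlt := j.isLt
            have hx := h2 j
            rw [if_neg (by omega), if_pos (by omega), if_neg (by omega)] at hx
            rw [hcyc_of_lt (j.val - 1) (by omega), show j.val - 1 + 1 = j.val by omega,
              hidxj] at hx
            exact hx.symm
      · rw [if_neg (by omega), ← hcm]
        exact hFcm.symm
    · have hcmv : (cyc m).val = m.val + 1 := cyc_val_of_lt (by omega)
      rw [if_neg hmM] at h1
      have hidxcm : idx M (m.val + 1) = cyc m := Fin.ext (by rw [idx_val_of_lt (by omega)]; omega)
      rw [hidxcm] at h1
      -- facts from far end
      have hlast := h2 (idx M (M - 1))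
      have hlv : (idx M (M - 1)).val = M - 1 := idx_val_of_lt (by omega)
      rw [if_pos (by omega), if_pos (by omega), if_neg (by omega)] at hlast
      rw [hcyck_last (idx M (M - 1)) (by omega)] at hlast
      -- hlast : a = t' (idx M 0)
      by_cases hm0 : m.val = 0
      · rw [if_pos hm0] at h1
        -- h1 : s (cyc m) = a
        have hm_idx0 : idx M 0 = m := Fin.ext (by rw [hidx0]; omega)
        refine ⟨fun j => ?_, by rw [if_pos hm0]; exact h1.symm⟩
        · by_cases hjm : j = m
          · rw [if_pos hjm, hjm]
            rw [hm_idx0] at hlast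
            rw [← hlast, h1]
          · by_cases hjcm : j = cyc m
            · rw [if_neg hjm, if_pos hjcm, hjcm]
              exact hFm.symm
            · rw [if_neg hjm, if_neg hjcm]
              have hjm' : j.val ≠ m.val := fun h => hjm (Fin.ext h)
              have hjcm' : j.val ≠ (cyc m).val := fun h => hjcm (Fin.ext h)
              have hjlt := j.isLt
              have hjval : (idx M (j.val - 1)).val = j.val - 1 := idx_val_of_lt (by omega)
              have hx := h2 (idx M (j.val - 1))
              rw [if_pos (by omega), if_neg (by omega), if_neg (by omega)] at hx
              rw [hjval, show j.val - 1 + 1 = j.val by omega, hidxj,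
                hcyc_of_lt (j.val - 1) (by omega), show j.val - 1 + 1 = j.val by omega,
                hidxj] at hx
              exact hx.symm
      · rw [if_neg hm0] at h1
        have hc1 : cyc (idx M (m.val - 1)) = m := by
          rw [hcyc_of_lt (m.val - 1) (by omega), show m.val - 1 + 1 = m.val by omega, hidxj]
        rw [hc1] at h1
        -- h1 : s (cyc m) = t' m
        have h00 := h2 (idx M 0)
        rw [if_neg (by omega), if_pos (by omega), if_pos (by omega)] at h00
        -- h00 : s (idx M 0) = a
        refine ⟨fun j => ?_, by rw [if_neg hm0]; exact h00.symm⟩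
        · by_cases hjm : j = m
          · rw [if_pos hjm, hjm]
            exact h1.symm
          · by_cases hjcm : j = cyc m
            · rw [if_neg hjm, if_pos hjcm, hjcm]
              exact hFm.symm
            · rw [if_neg hjm, if_neg hjcm]
              have hjm' : j.val ≠ m.val := fun h => hjm (Fin.ext h)
              have hjcm' : j.val ≠ (cyc m).val := fun h => hjcm (Fin.ext h)
              have hjlt := j.isLt
              by_cases hj0 : j.val = 0
              · have hj_idx0 : j = idx M 0 := Fin.ext (by rw [hidx0, hj0])
                rw [hj_idx0, ← hlast, ← h00]
              · by_cases hjsm : j.val < m.val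
                · have hx := h2 j
                  rw [if_neg (by omega), if_pos (by omega), if_neg (by omega)] at hx
                  rw [hcyc_of_lt (j.val - 1) (by omega),
                    show j.val - 1 + 1 = j.val by omega, hidxj] at hx
                  exact hx.symm
                · have hjval : (idx M (j.val - 1)).val = j.val - 1 := idx_val_of_lt (by omega)
                  have hx := h2 (idx M (j.val - 1))
                  rw [if_pos (by omega), if_neg (by omega), if_neg (by omega)] at hx
                  rw [hjval, show j.val - 1 + 1 = j.val by omega, hidxj,
                    hcyc_of_lt (j.val - 1) (by omega), show j.val - 1 + 1 = j.val by omega,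
                    hidxj] at hx
                  exact hx.symm
  · rintro ⟨hT, ha⟩
    have hcm_ne_m : cyc m ≠ m := by
      intro h
      have := congrArg Fin.val h
      by_cases h1 : m.val + 1 = M
      · rw [cyc_val_last h1] at this
        omega
      · rw [cyc_val_of_lt (by omega)] at this
        omega
    constructor
    · by_cases hmM : M = m.val + 1
      · rw [if_pos hmM, if_neg (by omega)]
        have hc1 : cyc (idx M (m.val - 1)) = m := by
          rw [hcyc_of_lt (m.val - 1) (by omega), show m.val - 1 + 1 = m.val by omega, hidxj]
        rw [hc1, hT m, if_pos rfl, ha, if_neg (by omega)]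
        congr 1
        exact (hcyck_last m (by omega)).symm
      · rw [if_neg hmM]
        have hcmv : (cyc m).val = m.val + 1 := cyc_val_of_lt (by omega)
        have hidxcm : idx M (m.val + 1) = cyc m :=
          Fin.ext (by rw [idx_val_of_lt (by omega)]; omega)
        rw [hidxcm]
        by_cases hm0 : m.val = 0
        · rw [if_pos hm0, ha, if_pos hm0]
        · rw [if_neg hm0]
          have hc1 : cyc (idx M (m.val - 1)) = m := by
            rw [hcyc_of_lt (m.val - 1) (by omega), show m.val - 1 + 1 = m.val by omega, hidxj]
          rw [hc1, hT m, if_pos rfl]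
    · intro k
      have hkv := k.isLt
      by_cases hk1 : m.val + 1 ≤ k.val
      · by_cases hkl : k.val = M - 1
        · rw [if_pos (show m.val + 1 ≤ k.val ∧ k.val < M by omega), if_pos hkl,
            if_neg (show ¬k.val < m.val by omega), hcyck_last k (by omega), hT (idx M 0)]
          by_cases hm0 : m.val = 0
          · rw [if_pos (Fin.ext (by rw [hidx0]; omega)), ha, if_pos hm0]
          · rw [if_neg (fun h => hm0 (by have := congrArg Fin.val h; rw [hidx0] at this; omega)),
              if_neg (fun h => by
                have := congrArg Fin.val h
                rw [hidx0] at this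
                by_cases h1 : m.val + 1 = M
                · omega
                · rw [cyc_val_of_lt (by omega)] at this; omega),
              ha, if_neg hm0]
        · rw [if_pos (show m.val + 1 ≤ k.val ∧ k.val < M by omega), if_neg hkl,
            if_neg (show ¬k.val < m.val by omega), hcyck k (by omega), hT (idx M (k.val + 1))]
          have hjv : (idx M (k.val + 1)).val = k.val + 1 := idx_val_of_lt (by omega)
          rw [if_neg (fun h => by have := congrArg Fin.val h; omega),
            if_neg (fun h => by
              have := congrArg Fin.val h
              rw [hjv] at this
              by_cases h1 : m.val + 1 = M
              · rw [cyc_val_last h1] at this; omega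
              · rw [cyc_val_of_lt (by omega)] at this; omega)]
      · by_cases hkm : k.val = m.val
        · have hkm' : k = m := Fin.ext hkm
          rw [if_neg (show ¬(m.val + 1 ≤ k.val ∧ k.val < M) by omega),
            if_neg (show ¬k.val < m.val by omega), hkm', hT (cyc m), if_neg hcm_ne_m, if_pos rfl]
        · by_cases hk0 : k.val = 0
          · rw [if_neg (show ¬(m.val + 1 ≤ k.val ∧ k.val < M) by omega),
              if_pos (show k.val < m.val by omega), if_pos hk0, ha,
              if_neg (show ¬m.val = 0 by omega)]
            congr 1
            exact Fin.ext (by rw [hidx0, hk0])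
          · rw [if_neg (show ¬(m.val + 1 ≤ k.val ∧ k.val < M) by omega),
              if_pos (show k.val < m.val by omega), if_neg hk0]
            have hc1 : cyc (idx M (k.val - 1)) = k := by
              rw [hcyc_of_lt (k.val - 1) (by omega), show k.val - 1 + 1 = k.val by omega, hidxj]
            rw [hc1, hT k, if_neg (fun h => by have := congrArg Fin.val h; omega),
              if_neg (fun h => by
                have := congrArg Fin.val h
                by_cases h1 : m.val + 1 = M
                · rw [cyc_val_last h1] at this; omega
                · rw [cyc_val_of_lt (by omega)] at this; omega)]

lemma collapse_pair {α β : Type*} [Fintype α] [Fintype β] [DecidableEq α] [DecidableEq β]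
    (X : α) (F : β) (g : α → β → ℂ) :
    (∑ b : α, ∑ u : β, (if (b = X ∧ u = F) then (1 : ℂ) else 0) * g b u) = g X F := by
  rw [Finset.sum_eq_single X]
  · rw [Finset.sum_eq_single F]
    · simp
    · intro u _ hu
      rw [if_neg (by tauto), zero_mul]
    · intro h
      exact absurd (Finset.mem_univ F) h
  · intro b _ hb
    apply Finset.sum_eq_zero
    intro u _
    rw [if_neg (by tauto), zero_mul]
  · intro h
    exact absurd (Finset.mem_univ X) h

lemma Ldm_mul_apply (η : ℂ) (m : Fin M) (W : Matrix (Fin 2 × Spins M) (Fin 2 × Spins M) ℂ)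
    (q r : Fin 2 × Spins M) :
    (Ldm M η m * W) q r = (if q.1 = q.2 m then Complex.cosh η else 1) * W q r := by
  rw [Matrix.mul_apply, Finset.sum_eq_single q]
  · simp [Ldm]
  · intro b _ hbq
    show (if q = b then (if q.1 = q.2 m then Complex.cosh η else 1) else 0) * W b r = 0
    rw [if_neg (fun h => hbq h.symm), zero_mul]
  · intro h
    exact absurd (Finset.mem_univ q) h

lemma trace_term [NeZero M] (hM : 2 ≤ M) (η : ℂ) (m : Fin M) (s t' : Spins M) :
    ∑ a : Fin 2,
      (winP M (m.val + 1) M * (Ldm M η m * winP M 0 m.val)) (a, s) (a, fun k => t' (cyc k)) =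
    (if (∀ j, t' j = if j = m then s (cyc m) else if j = cyc m then s m else s j) then 1 else 0) *
      (if s (cyc m) = s m then Complex.cosh η else 1) := by
  have hmv : m.val < M := m.isLt
  have hsumm : ∀ a : Fin 2,
      (winP M (m.val + 1) M * (Ldm M η m * winP M 0 m.val)) (a, s) (a, fun k => t' (cyc k)) =
      (if ((∀ j, t' j = if j = m then s (cyc m) else if j = cyc m then s m else s j) ∧
          a = (if m.val = 0 then s (cyc m) else s (idx M 0))) then 1 else 0) *
        (if s (cyc m) = s m then Complex.cosh η else 1) := by
    intro a
    rw [Matrix.mul_apply, Fintype.sum_prod_type]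
    have hcol : ∀ (b : Fin 2) (u : Spins M), winP M (m.val + 1) M (a, s) (b, u) =
        (if (b = (if M = m.val + 1 then a else s (idx M (m.val + 1))) ∧
             u = fun k : Fin M => (if m.val + 1 ≤ k.val ∧ k.val < M
                then (if k.val = M - 1 then a else s (idx M (k.val + 1))) else s k))
          then (1 : ℂ) else 0) := by
      intro b u
      rw [winP_apply_col M (m.val + 1) (by omega) le_rfl]
      exact if_congr (and_congr Iff.rfl ⟨fun h => funext h, fun h k => congrFun h k⟩) rfl rfl
    simp only [hcol]
    rw [collapse_pair, Ldm_mul_apply]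
    simp only [winP_apply_row (M := M) m.val 0 (Nat.zero_le m.val) (Nat.le_of_lt hmv)]
    simp only [Nat.zero_le, true_and]
    simp only [if_neg (show ¬(m.val + 1 ≤ m.val ∧ m.val < M) by omega)]
    by_cases hE : ((∀ j, t' j = if j = m then s (cyc m) else if j = cyc m then s m else s j) ∧
        a = (if m.val = 0 then s (cyc m) else s (idx M 0)))
    · rw [if_pos hE, if_pos ((cond_iff hM m a s t').mpr hE)]
      have hX : (if M = m.val + 1 then a else s (idx M (m.val + 1))) = s (cyc m) := by
        by_cases hmM : M = m.val + 1
        · rw [if_pos hmM, hE.2, if_neg (by omega)]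
          exact congrArg s (Fin.ext (by rw [idx_val_of_lt (by omega), cyc_val_last (by omega)]))
        · rw [if_neg hmM]
          exact congrArg s (Fin.ext (by rw [idx_val_of_lt (by omega), cyc_val_of_lt (by omega)]))
      rw [hX, mul_one, one_mul]
    · rw [if_neg hE, if_neg (fun h => hE ((cond_iff hM m a s t').mp h)), mul_zero, zero_mul]
  simp only [hsumm]
  rw [Fin.sum_univ_two]
  by_cases hE : (∀ j, t' j = if j = m then s (cyc m) else if j = cyc m then s m else s j)
  · rcases (show ∀ c : Fin 2, c = 0 ∨ c = 1 by decide)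
        (if m.val = 0 then s (cyc m) else s (idx M 0)) with h | h <;>
      rw [h] <;> simp [hE]
  · simp [hE]

/-- Local two-site operator appearing in the trace identity. -/
def Emat (M : ℕ) (η : ℂ) (m : Fin M) : Matrix (Spins M) (Spins M) ℂ :=
  fun s t' =>
    (if (∀ j, t' j = if j = m then s (cyc m) else if j = cyc m then s m else s j) then 1 else 0) *
      (if s (cyc m) = s m then Complex.cosh η else 1)

lemma cyc_ne_self (hM : 2 ≤ M) (m : Fin M) : cyc m ≠ m := by
  intro h
  have := congrArg Fin.val h
  by_cases h1 : m.val + 1 = M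
  · rw [cyc_val_last h1] at this
    omega
  · rw [cyc_val_of_lt (by have := m.isLt; omega)] at this
    omega

lemma pauliAt_mul_apply (P Q : Matrix (Fin 2) (Fin 2) ℂ) (m n : Fin M) (hmn : m ≠ n)
    (s t : Spins M) :
    (pauliAt M P m * pauliAt M Q n) s t =
      P (s m) (t m) * Q (s n) (t n) * (if ∀ k, k ≠ m → k ≠ n → s k = t k then 1 else 0) := by
  rw [Matrix.mul_apply, Finset.sum_eq_single (Function.update s m (t m))]
  · simp only [pauliAt]
    rw [Function.update_self, Function.update_of_ne (Ne.symm hmn),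
      if_pos (fun k (hk : k ≠ m) => (Function.update_of_ne hk (t m) s).symm)]
    have hind : (∀ k, k ≠ n → Function.update s m (t m) k = t k) ↔
        (∀ k, k ≠ m → k ≠ n → s k = t k) := by
      constructor
      · intro h k hkm hkn
        have := h k hkn
        rwa [Function.update_of_ne hkm] at this
      · intro h k hkn
        by_cases hkm : k = m
        · subst hkm
          rw [Function.update_self]
        · rw [Function.update_of_ne hkm]
          exact h k hkm hkn
    rw [if_congr hind rfl rfl]
    ring
  · intro u _ hu
    simp only [pauliAt]
    by_cases h1 : ∀ k, k ≠ m → s k = u k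
    · by_cases h2 : ∀ k, k ≠ n → u k = t k
      · exfalso
        apply hu
        funext k
        by_cases hkm : k = m
        · rw [hkm, Function.update_self]
          exact h2 m hmn
        · rw [Function.update_of_ne hkm]
          exact (h1 k hkm).symm
      · rw [if_neg h2, mul_zero, mul_zero]
    · rw [if_neg h1, mul_zero, zero_mul]
  · intro h
    exact absurd (Finset.mem_univ _) h

lemma pauli_entry (η : ℂ) (A B C D : Fin 2) :
    sigmaX A C * sigmaX B D + sigmaY A C * sigmaY B D +
      Complex.cosh η * (sigmaZ A C * sigmaZ B D - (if (C = A ∧ D = B) then (1 : ℂ) else 0)) =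
    2 * ((if (C = B ∧ D = A) then (1 : ℂ) else 0) * (if B = A then Complex.cosh η else 1)) -
      2 * Complex.cosh η * (if (C = A ∧ D = B) then (1 : ℂ) else 0) := by
  fin_cases A <;> fin_cases B <;> fin_cases C <;> fin_cases D <;>
    simp [sigmaX, sigmaY, sigmaZ] <;> ring

lemma Emat_pauli (hM : 2 ≤ M) (η : ℂ) (m : Fin M) :
    pauliAt M sigmaX m * pauliAt M sigmaX (cyc m) + pauliAt M sigmaY m * pauliAt M sigmaY (cyc m) +
      Complex.cosh η • (pauliAt M sigmaZ m * pauliAt M sigmaZ (cyc m) - 1) =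
    (2 : ℂ) • Emat M η m - (2 * Complex.cosh η) • 1 := by
  have hmn : m ≠ cyc m := (cyc_ne_self hM m).symm
  ext s t
  simp only [Matrix.add_apply, Matrix.smul_apply, Matrix.sub_apply, Matrix.one_apply,
    pauliAt_mul_apply _ _ m (cyc m) hmn, Emat, smul_eq_mul]
  by_cases hoff : ∀ k, k ≠ m → k ≠ cyc m → s k = t k
  · rw [if_pos hoff]
    have hone : (s = t) ↔ ((t m = s m) ∧ (t (cyc m) = s (cyc m))) := by
      constructor
      · rintro rfl
        exact ⟨rfl, rfl⟩
      · rintro ⟨h1, h2⟩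
        funext k
        by_cases hk : k = m
        · rw [hk, h1]
        · by_cases hk2 : k = cyc m
          · rw [hk2, h2]
          · exact hoff k hk hk2
    have hE : (∀ j, t j = if j = m then s (cyc m) else if j = cyc m then s m else s j) ↔
        ((t m = s (cyc m)) ∧ (t (cyc m) = s m)) := by
      constructor
      · intro h
        refine ⟨?_, ?_⟩
        · have := h m
          rwa [if_pos rfl] at this
        · have := h (cyc m)
          rwa [if_neg (cyc_ne_self hM m), if_pos rfl] at this
      · rintro ⟨h1, h2⟩ j
        by_cases hj : j = m
        · rw [if_pos hj, hj]
          exact h1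
        · rw [if_neg hj]
          by_cases hj2 : j = cyc m
          · rw [if_pos hj2, hj2]
            exact h2
          · rw [if_neg hj2]
            exact (hoff j hj hj2).symm
    rw [if_congr hone rfl rfl, if_congr hE rfl rfl]
    simpa using pauli_entry η (s m) (s (cyc m)) (t m) (t (cyc m))
  · rw [if_neg hoff]
    have hone : ¬(s = t) := fun h => hoff (fun k _ _ => by rw [h])
    have hE : ¬(∀ j, t j = if j = m then s (cyc m) else if j = cyc m then s m else s j) := by
      intro h
      apply hoff
      intro k hk1 hk2
      have := h k
      rw [if_neg hk1, if_neg hk2] at this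
      exact this.symm
    rw [if_neg hone, if_neg hE]
    ring

lemma sum_Emat (hM : 2 ≤ M) (η : ℂ) :
    Ham M η = (2 : ℂ) • (∑ m, Emat M η m) - ((2 : ℂ) * M * Complex.cosh η) • 1 := by
  rw [Ham, Finset.sum_congr rfl (fun m _ => Emat_pauli hM η m), Finset.sum_sub_distrib,
    ← Finset.smul_sum, Finset.sum_const, Finset.card_univ, Fintype.card_fin]
  congr 1
  rw [← Nat.cast_smul_eq_nsmul ℂ, smul_smul]
  congr 1
  ring

end AuxTrace

/-- Trace identity: for the homogeneous chain (`ξ_a = η/2`) the Hamiltonian is obtained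
from the logarithmic derivative of the transfer matrix at `λ = η/2`. -/
theorem trace_identity (M : ℕ) (hM : 2 ≤ M) (η : ℂ) (hη : Complex.sinh η ≠ 0)
    (T' : Matrix (Spins M) (Spins M) ℂ)
    (hT' : ∀ s t : Spins M,
      HasDerivAt (fun lam => transfer M η (fun _ => η / 2) lam s t) (T' s t) (η / 2)) :
    IsUnit (transfer M η (fun _ => η / 2) (η / 2)) ∧
      ∃ c : ℂ, Ham M η =
        (2 * Complex.sinh η) • (T' * (transfer M η (fun _ => η / 2) (η / 2))⁻¹) + c • 1 := by
  haveI : NeZero M := ⟨by omega⟩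
  have hpow : Complex.sinh η ^ M ≠ 0 := pow_ne_zero _ hη
  have hTval := transfer_eta (M := M) η
  have hright : transfer M η (fun _ => η / 2) (η / 2) * ((Complex.sinh η ^ M)⁻¹ • Vmat M) = 1 := by
    rw [hTval, Matrix.smul_mul, Matrix.mul_smul, Umat_mul_Vmat, smul_smul,
      mul_inv_cancel₀ hpow, one_smul]
  have hleft : ((Complex.sinh η ^ M)⁻¹ • Vmat M) * transfer M η (fun _ => η / 2) (η / 2) = 1 := by
    rw [hTval, Matrix.smul_mul, Matrix.mul_smul, Vmat_mul_Umat, smul_smul,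
      inv_mul_cancel₀ hpow, one_smul]
  have hinv : (transfer M η (fun _ => η / 2) (η / 2))⁻¹ = (Complex.sinh η ^ M)⁻¹ • Vmat M :=
    Matrix.inv_eq_right_inv hright
  constructor
  · exact ⟨⟨transfer M η (fun _ => η / 2) (η / 2), (Complex.sinh η ^ M)⁻¹ • Vmat M,
      hright, hleft⟩, rfl⟩
  · refine ⟨-(2 * M * Complex.cosh η), ?_⟩
    have hT'eq : T' = fun s t => Dmat M η M (0, s) (0, t) + Dmat M η M (1, s) (1, t) := by
      funext s t
      refine (hT' s t).unique ?_
      have hfun : (fun lam => transfer M η (fun _ => η / 2) lam s t) =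
          fun lam => Pfun M η (fun _ => η / 2) lam M (0, s) (0, t) +
            Pfun M η (fun _ => η / 2) lam M (1, s) (1, t) := by
        funext lam
        rw [transfer, transferK, Matrix.add_apply, Matrix.smul_apply, one_smul, Aop, Dop,
          Tmono_eq_Pfun]
      rw [hfun]
      exact (hasDerivAt_Pfun η le_rfl _ _).add (hasDerivAt_Pfun η le_rfl _ _)
    have hDm : Dmat M η M = ∑ m : Fin M, (Complex.sinh η ^ (M - 1)) •
        (winP M (m.val + 1) M * (Ldm M η m * winP M 0 m.val)) := by
      rw [Dmat, ← Fin.sum_univ_eq_sum_range]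
      refine Finset.sum_congr rfl fun m _ => ?_
      rw [LdN, dif_pos m.isLt]
      simp only [Fin.eta]
      rw [Matrix.smul_mul, Matrix.smul_mul, Matrix.mul_smul, smul_smul, ← pow_add,
        show M - m.val - 1 + m.val = M - 1 from by have := m.isLt; omega, Matrix.mul_assoc]
    have hTV : T' * Vmat M = Complex.sinh η ^ (M - 1) • ∑ m : Fin M, Emat M η m := by
      ext s t'
      rw [Matrix.mul_apply]
      have hcollapse : ∀ t, Vmat M t t' = if t = (fun k => t' (cyc k)) then (1 : ℂ) else 0 := by
        intro t
        rw [Vmat]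
        exact if_congr ⟨fun h => funext h, fun h k => congrFun h k⟩ rfl rfl
      simp only [hcollapse, mul_ite, mul_one, mul_zero]
      rw [Finset.sum_ite_eq' Finset.univ (fun k => t' (cyc k)) (fun t => T' s t)]
      simp only [Finset.mem_univ, if_true]
      simp only [hT'eq, hDm, Matrix.sum_apply, Matrix.smul_apply, smul_eq_mul]
      rw [← Finset.sum_add_distrib, Finset.mul_sum]
      refine Finset.sum_congr rfl fun m _ => ?_
      rw [← mul_add]
      congr 1
      have htt := trace_term hM η m s t'
      rw [Fin.sum_univ_two] at htt
      exact htt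
    rw [hinv, Matrix.mul_smul, hTV, smul_smul, smul_smul]
    have hsc : 2 * Complex.sinh η * (Complex.sinh η ^ M)⁻¹ * Complex.sinh η ^ (M - 1) =
        (2 : ℂ) := by
      have h1 : Complex.sinh η * Complex.sinh η ^ (M - 1) = Complex.sinh η ^ M := by
        rw [← pow_succ']
        congr 1
        omega
      calc 2 * Complex.sinh η * (Complex.sinh η ^ M)⁻¹ * Complex.sinh η ^ (M - 1)
          = 2 * ((Complex.sinh η * Complex.sinh η ^ (M - 1)) * (Complex.sinh η ^ M)⁻¹) := by
            ring
        _ = 2 := by rw [h1, mul_inv_cancel₀ hpow, mul_one]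
    rw [hsc, sum_Emat hM η, sub_eq_add_neg, neg_smul]

end
end

section
/- (Quantum inverse scattering problem.) For every M ≥ 1, every ξ1,…,ξM ∈ ℂ, every j ∈ {1,…,M} and every α ∈ {x,y,z}, one has the operator identity on H: [∏_{k=1}^{j−1} 𝒯(ξk)] · tr_0[(σ^α ⊗ Id_H) T(ξj)] = σ^α_j · ∏_{k=1}^{j} 𝒯(ξk), where tr_0 denotes the partial trace over the auxiliary space V0 = ℂ², σ^α in the left-hand side acts in V0, and σ^α_j acts as the Pauli matrix σ^α on the j-th tensor factor of H and as identity elsewhere. -/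
open Complex Matrix BigOperators

noncomputable section

/-- Partial trace over the auxiliary space `V_0 = ℂ²`. -/
def ptrace0 {M : ℕ} (X : Matrix (Fin 2 × Spins M) (Fin 2 × Spins M) ℂ) :
    Matrix (Spins M) (Spins M) ℂ :=
  fun s t => ∑ i : Fin 2, X (i, s) (i, t)

/-- `P ⊗ Id_H` acting on `ℂ² ⊗ H`. -/
def kron0 {M : ℕ} (P : Matrix (Fin 2) (Fin 2) ℂ) :
    Matrix (Fin 2 × Spins M) (Fin 2 × Spins M) ℂ :=
  fun p q => P p.1 q.1 * (if p.2 = q.2 then 1 else 0)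

namespace QISP

variable {M : ℕ}

/-! ### Generic ordered product combinators -/

/-- descending product `g (b-1) * g (b-2) * ⋯ * g a`. -/
def seg {α : Type*} [Monoid α] (g : ℕ → α) (a b : ℕ) : α :=
  ((List.range (b - a)).map (fun i => g (b - 1 - i))).prod

/-- ascending product `g a * g (a+1) * ⋯ * g (b-1)`. -/
def ffrom {α : Type*} [Monoid α] (g : ℕ → α) (a b : ℕ) : α :=
  ((List.range (b - a)).map (fun i => g (a + i))).prod

@[simp] lemma seg_self {α : Type*} [Monoid α] (g : ℕ → α) (a : ℕ) : seg g a a = 1 := by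
  simp [seg]

lemma seg_of_le {α : Type*} [Monoid α] (g : ℕ → α) {a b : ℕ} (h : b ≤ a) : seg g a b = 1 := by
  simp [seg, Nat.sub_eq_zero_of_le h]

lemma seg_succ {α : Type*} [Monoid α] (g : ℕ → α) {a b : ℕ} (h : a ≤ b) :
    seg g a (b + 1) = g b * seg g a b := by
  have h1 : b + 1 - a = (b - a) + 1 := by omega
  rw [seg, h1, List.range_succ_eq_map, List.map_cons, List.prod_cons, List.map_map]
  have e0 : b + 1 - 1 - 0 = b := by omega
  have e1 : ((fun i => g (b + 1 - 1 - i)) ∘ Nat.succ) = fun i => g (b - 1 - i) := by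
    funext i
    simp only [Function.comp]
    congr 1
    omega
  rw [e0, e1, seg]

lemma seg_split {α : Type*} [Monoid α] (g : ℕ → α) {a c b : ℕ} (hac : a ≤ c) (hcb : c ≤ b) :
    seg g a b = seg g c b * seg g a c := by
  induction b, hcb using Nat.le_induction with
  | base => rw [seg_self, one_mul]
  | succ b hb ih =>
      rw [seg_succ (g := g) (le_trans hac hb), seg_succ (g := g) hb, ih, mul_assoc]

@[simp] lemma ffrom_self {α : Type*} [Monoid α] (g : ℕ → α) (a : ℕ) : ffrom g a a = 1 := by
  simp [ffrom]

lemma ffrom_of_le {α : Type*} [Monoid α] (g : ℕ → α) {a b : ℕ} (h : b ≤ a) :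
    ffrom g a b = 1 := by
  simp [ffrom, Nat.sub_eq_zero_of_le h]

lemma ffrom_succ {α : Type*} [Monoid α] (g : ℕ → α) {a b : ℕ} (h : a ≤ b) :
    ffrom g a (b + 1) = ffrom g a b * g b := by
  have h1 : b + 1 - a = (b - a) + 1 := by omega
  rw [ffrom, h1, List.range_succ, List.map_append, List.prod_append]
  congr 1
  simp only [List.map_cons, List.map_nil, List.prod_cons, List.prod_nil, mul_one]
  congr 1
  omega

lemma ffrom_cons {α : Type*} [Monoid α] (g : ℕ → α) {a b : ℕ} (h : a < b) :
    ffrom g a b = g a * ffrom g (a + 1) b := by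
  have h1 : b - a = (b - (a + 1)) + 1 := by omega
  rw [ffrom, h1, List.range_succ_eq_map, List.map_cons, List.prod_cons, List.map_map]
  have e0 : a + 0 = a := by omega
  have e1 : ((fun i => g (a + i)) ∘ Nat.succ) = fun i => g (a + 1 + i) := by
    funext i
    simp only [Function.comp]
    congr 1
    omega
  rw [e0, e1, ffrom]

lemma ofFn_reverse_prod {α : Type*} [Monoid α] (n : ℕ) (g : ℕ → α) :
    ((List.ofFn (fun i : Fin n => g i.val)).reverse).prod = seg g 0 n := by
  induction n with
  | zero => simp [seg]
  | succ n ih =>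
      rw [List.ofFn_succ']
      simp only [Fin.coe_castSucc, Fin.val_last]
      rw [List.concat_eq_append, List.reverse_append, List.reverse_singleton]
      simp only [List.singleton_append, List.prod_cons]
      rw [ih, seg_succ (g := g) (Nat.zero_le n)]

lemma ofFn_prod {α : Type*} [Monoid α] (n : ℕ) (g : ℕ → α) :
    (List.ofFn (fun i : Fin n => g i.val)).prod = ffrom g 0 n := by
  induction n with
  | zero => simp [ffrom]
  | succ n ih =>
      rw [List.ofFn_succ']
      simp only [Fin.coe_castSucc, Fin.val_last]
      rw [List.concat_eq_append, List.prod_append]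
      simp only [List.prod_cons, List.prod_nil, mul_one]
      rw [ih, ffrom_succ (g := g) (Nat.zero_le n)]


/-! ### Sum helpers on spin configurations -/

lemma sum_slice (m : Fin M) (v : Fin 2) (f : Spins M → ℂ)
    (hf : ∀ u, u m ≠ v → f u = 0) :
    ∑ u : Spins M, f u = ∑ u : Spins M, if u m = 0 then f (Function.update u m v) else 0 := by
  classical
  have hσ : Function.Involutive
      (fun u : Spins M => Function.update u m (Equiv.swap 0 v (u m))) := by
    intro u
    funext k
    by_cases hk : k = m
    · subst hk; simp
    · simp [Function.update_of_ne hk]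
  rw [← Function.Bijective.sum_comp hσ.bijective f]
  apply Finset.sum_congr rfl
  intro u _
  by_cases h0 : u m = 0
  · rw [if_pos h0, h0, Equiv.swap_apply_left]
  · rw [if_neg h0]
    by_cases hv : u m = v
    · rw [hv, Equiv.swap_apply_right]
      apply hf
      rw [Function.update_self]
      intro h
      exact h0 (hv.trans h.symm)
    · rw [Equiv.swap_apply_of_ne_of_ne h0 hv, Function.update_eq_self]
      exact hf u hv

lemma sum_fiber (m : Fin M) (F : Spins M → ℂ) :
    ∑ u : Spins M, F u =
      ∑ b : Fin 2, ∑ u : Spins M, if u m = 0 then F (Function.update u m b) else 0 := by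
  classical
  have h1 : ∀ u : Spins M, F u = ∑ b : Fin 2, if u m = b then F u else 0 := by
    intro u
    rw [Finset.sum_ite_eq Finset.univ (u m) (fun _ => F u)]
    simp
  calc ∑ u : Spins M, F u = ∑ u : Spins M, ∑ b : Fin 2, if u m = b then F u else 0 := by
        exact Finset.sum_congr rfl (fun u _ => h1 u)
    _ = ∑ b : Fin 2, ∑ u : Spins M, if u m = b then F u else 0 := Finset.sum_comm
    _ = _ := by
        apply Finset.sum_congr rfl
        intro b _
        rw [sum_slice m b (fun u => if u m = b then F u else 0)
          (by intro u hu; simp [hu])]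
        apply Finset.sum_congr rfl
        intro u _
        by_cases h0 : u m = 0
        · rw [if_pos h0, if_pos h0, if_pos (Function.update_self m b u)]
        · rw [if_neg h0, if_neg h0]

lemma sum_agree_one (a : Fin M) (s : Spins M) (f : Spins M → ℂ)
    (hf : ∀ u, ¬(∀ k, k ≠ a → u k = s k) → f u = 0) :
    ∑ u : Spins M, f u = ∑ x : Fin 2, f (Function.update s a x) := by
  classical
  have himg : (Finset.univ.filter (fun u : Spins M => ∀ k, k ≠ a → u k = s k))
      = Finset.univ.image (fun x : Fin 2 => Function.update s a x) := by
    ext u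
    simp only [Finset.mem_filter, Finset.mem_univ, true_and, Finset.mem_image]
    constructor
    · intro h
      refine ⟨u a, ?_⟩
      funext k
      by_cases hk : k = a
      · subst hk; simp
      · rw [Function.update_of_ne hk]
        exact (h k hk).symm
    · rintro ⟨x, rfl⟩ k hk
      rw [Function.update_of_ne hk]
  have hinj : ∀ x ∈ Finset.univ, ∀ y ∈ Finset.univ,
      Function.update s a x = Function.update s a y → x = y := by
    intro x _ y _ h
    have := congrFun h a
    simpa using this
  rw [← Finset.sum_filter_of_ne (s := Finset.univ) (f := f)
    (p := fun u => ∀ k, k ≠ a → u k = s k)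
    (by intro u _ hne; by_contra hc; exact hne (hf u hc)), himg, Finset.sum_image hinj]

lemma sum_agree_two (a b : Fin M) (hab : a ≠ b) (s : Spins M) (f : Spins M → ℂ)
    (hf : ∀ u, ¬(∀ k, k ≠ a → k ≠ b → u k = s k) → f u = 0) :
    ∑ u : Spins M, f u =
      ∑ x : Fin 2, ∑ y : Fin 2, f (Function.update (Function.update s a x) b y) := by
  classical
  have himg : (Finset.univ.filter (fun u : Spins M => ∀ k, k ≠ a → k ≠ b → u k = s k))
      = Finset.univ.image
          (fun p : Fin 2 × Fin 2 => Function.update (Function.update s a p.1) b p.2) := by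
    ext u
    simp only [Finset.mem_filter, Finset.mem_univ, true_and, Finset.mem_image]
    constructor
    · intro h
      refine ⟨(u a, u b), ?_⟩
      funext k
      by_cases hkb : k = b
      · subst hkb; simp
      · rw [Function.update_of_ne hkb]
        by_cases hka : k = a
        · subst hka; simp
        · rw [Function.update_of_ne hka]
          exact (h k hka hkb).symm
    · rintro ⟨p, rfl⟩ k hka hkb
      rw [Function.update_of_ne hkb, Function.update_of_ne hka]
  have hinj : ∀ p ∈ Finset.univ, ∀ q ∈ Finset.univ,
      (fun p : Fin 2 × Fin 2 => Function.update (Function.update s a p.1) b p.2) p =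
      (fun p : Fin 2 × Fin 2 => Function.update (Function.update s a p.1) b p.2) q → p = q := by
    intro p _ q _ h
    have h1 := congrFun h b
    have h2 := congrFun h a
    simp only [Function.update_self] at h1
    simp only [Function.update_of_ne hab, Function.update_self] at h2
    exact Prod.ext h2 h1
  rw [← Finset.sum_filter_of_ne (s := Finset.univ) (f := f)
    (p := fun u => ∀ k, k ≠ a → k ≠ b → u k = s k)
    (by intro u _ hne; by_contra hc; exact hne (hf u hc)), himg, Finset.sum_image hinj,
    Fintype.sum_prod_type]


/-! ### Two-by-two level lemmas about the R-matrix -/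

def swapQ : Matrix (Fin 2 × Fin 2) (Fin 2 × Fin 2) ℂ :=
  fun p q => if p.1 = q.2 ∧ p.2 = q.1 then 1 else 0

lemma sinh_unit (η lam : ℂ) :
    Complex.sinh (η + lam) * Complex.sinh (η - lam) =
      Complex.sinh η ^ 2 - Complex.sinh lam ^ 2 := by
  have c2 : ∀ z : ℂ, Complex.cosh z ^ 2 = Complex.sinh z ^ 2 + 1 := fun z => Complex.cosh_sq z
  calc Complex.sinh (η + lam) * Complex.sinh (η - lam)
      = (Complex.sinh η * Complex.cosh lam + Complex.cosh η * Complex.sinh lam) *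
        (Complex.sinh η * Complex.cosh lam - Complex.cosh η * Complex.sinh lam) := by
        rw [Complex.sinh_add, Complex.sinh_sub]
    _ = Complex.sinh η ^ 2 * Complex.cosh lam ^ 2
        - Complex.cosh η ^ 2 * Complex.sinh lam ^ 2 := by ring
    _ = Complex.sinh η ^ 2 * (Complex.sinh lam ^ 2 + 1)
        - (Complex.sinh η ^ 2 + 1) * Complex.sinh lam ^ 2 := by rw [c2, c2]
    _ = _ := by ring

lemma Rmat_zero (η : ℂ) : Rmat η 0 = Complex.sinh η • swapQ := by
  ext p q
  fin_cases p <;> fin_cases q <;>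
    simp [Rmat, swapQ, Prod.ext_iff]

lemma Rmat_swap (η lam : ℂ) (p q : Fin 2 × Fin 2) :
    Rmat η lam (p.2, p.1) (q.2, q.1) = Rmat η lam p q := by
  obtain ⟨p1, p2⟩ := p
  obtain ⟨q1, q2⟩ := q
  fin_cases p1 <;> fin_cases p2 <;> fin_cases q1 <;> fin_cases q2 <;>
    simp [Rmat, Prod.ext_iff]

lemma Rmat_unit (η lam : ℂ) :
    Rmat η lam * Rmat η (-lam) =
      (Complex.sinh (η + lam) * Complex.sinh (η - lam)) •
        (1 : Matrix (Fin 2 × Fin 2) (Fin 2 × Fin 2) ℂ) := by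
  have hc : Complex.sinh (lam + η) * Complex.sinh (-lam + η) =
      Complex.sinh η ^ 2 - Complex.sinh lam ^ 2 := by
    rw [add_comm lam η, neg_add_eq_sub]
    exact sinh_unit η lam
  ext p q
  rw [Matrix.mul_apply, Fintype.sum_prod_type]
  rw [sinh_unit]
  fin_cases p <;> fin_cases q <;>
    simp [Rmat, Fin.sum_univ_two, Prod.ext_iff, Matrix.one_apply, Complex.sinh_neg, hc] <;>
    ring


/-! ### Site-local operators on the quantum space -/

def twoSite (Q : Matrix (Fin 2 × Fin 2) (Fin 2 × Fin 2) ℂ) (a b : Fin M) :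
    Matrix (Spins M) (Spins M) ℂ :=
  fun s t => Q (s a, s b) (t a, t b) * (if ∀ k, k ≠ a → k ≠ b → s k = t k then 1 else 0)

/-- `Z` acts trivially on site `m`. -/
def Htriv (m : Fin M) (Z : Matrix (Spins M) (Spins M) ℂ) : Prop :=
  ∀ s t, Z s t = if s m = t m
    then Z (Function.update s m 0) (Function.update t m 0) else 0

lemma Htriv_one (m : Fin M) : Htriv m (1 : Matrix (Spins M) (Spins M) ℂ) := by
  intro s t
  by_cases h : s m = t m
  · rw [if_pos h]
    by_cases hst : s = t
    · subst hst; rw [Matrix.one_apply_eq, Matrix.one_apply_eq]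
    · rw [Matrix.one_apply_ne hst, Matrix.one_apply_ne]
      intro hc
      apply hst
      funext k
      by_cases hk : k = m
      · subst hk; exact h
      · have := congrFun hc k
        rwa [Function.update_of_ne hk, Function.update_of_ne hk] at this
  · rw [if_neg h, Matrix.one_apply_ne]
    intro hc; exact h (by rw [hc])

lemma Htriv_smul {m : Fin M} (c : ℂ) {Z : Matrix (Spins M) (Spins M) ℂ}
    (hZ : Htriv m Z) : Htriv m (c • Z) := by
  intro s t
  simp only [Matrix.smul_apply]
  rw [hZ s t]
  split_ifs <;> simp

lemma Htriv_mul {m : Fin M} {X Y : Matrix (Spins M) (Spins M) ℂ}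
    (hX : Htriv m X) (hY : Htriv m Y) : Htriv m (X * Y) := by
  intro s t
  by_cases h : s m = t m
  · rw [if_pos h, Matrix.mul_apply, Matrix.mul_apply]
    have hL : ∀ u : Spins M, u m ≠ t m → X s u * Y u t = 0 := by
      intro u hu
      rw [hY u t, if_neg hu, mul_zero]
    rw [sum_slice m (t m) _ hL]
    have hR : ∀ u : Spins M, u m ≠ (0 : Fin 2) →
        X (Function.update s m 0) u * Y u (Function.update t m 0) = 0 := by
      intro u hu
      rw [hY u (Function.update t m 0)]
      simp [hu]
    rw [sum_slice m 0 _ hR]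
    apply Finset.sum_congr rfl
    intro u _
    by_cases h0 : u m = 0
    · rw [if_pos h0, if_pos h0]
      have hu0 : Function.update u m (0 : Fin 2) = u := by
        rw [← h0, Function.update_eq_self]
      have e1 : X s (Function.update u m (t m)) = X (Function.update s m 0) u := by
        rw [hX s (Function.update u m (t m))]
        rw [if_pos (by rw [Function.update_self]; exact h)]
        rw [Function.update_idem, hu0]
      have e2 : Y (Function.update u m (t m)) t = Y u (Function.update t m 0) := by
        rw [hY (Function.update u m (t m)) t]
        rw [if_pos (Function.update_self m (t m) u)]
        rw [Function.update_idem, hu0]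
      rw [e1, e2, hu0]
    · rw [if_neg h0, if_neg h0]
  · rw [if_neg h, Matrix.mul_apply]
    apply Finset.sum_eq_zero
    intro u _
    by_cases hu : u m = t m
    · rw [hX s u, if_neg (by rw [hu]; exact h), zero_mul]
    · rw [hY u t, if_neg hu, mul_zero]

lemma Htriv_twoSite {m a b : Fin M} (hma : m ≠ a) (hmb : m ≠ b)
    (Q : Matrix (Fin 2 × Fin 2) (Fin 2 × Fin 2) ℂ) :
    Htriv m (twoSite Q a b) := by
  intro s t
  by_cases h : s m = t m
  · rw [if_pos h]
    unfold twoSite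
    rw [Function.update_of_ne hma.symm, Function.update_of_ne hmb.symm,
      Function.update_of_ne hma.symm, Function.update_of_ne hmb.symm]
    congr 1
    by_cases hd : ∀ k, k ≠ a → k ≠ b → s k = t k
    · rw [if_pos hd, if_pos]
      intro k hka hkb
      by_cases hk : k = m
      · subst hk; simp
      · rw [Function.update_of_ne hk, Function.update_of_ne hk]; exact hd k hka hkb
    · rw [if_neg hd, if_neg]
      intro hc
      apply hd
      intro k hka hkb
      by_cases hk : k = m
      · subst hk; exact h
      · have := hc k hka hkb
        rwa [Function.update_of_ne hk, Function.update_of_ne hk] at this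
  · rw [if_neg h]
    unfold twoSite
    rw [if_neg, mul_zero]
    intro hc
    exact h (hc m hma hmb)

lemma twoSite_mul {a b : Fin M} (hab : a ≠ b)
    (Q Q' : Matrix (Fin 2 × Fin 2) (Fin 2 × Fin 2) ℂ) :
    twoSite Q a b * twoSite Q' a b = twoSite (Q * Q') a b := by
  ext s t
  rw [Matrix.mul_apply]
  rw [sum_agree_two a b hab s _ (by
    intro u hu
    by_cases hc : ∀ k, k ≠ a → k ≠ b → s k = u k
    · exact absurd (fun k h1 h2 => (hc k h1 h2).symm) hu
    · unfold twoSite; rw [if_neg hc, mul_zero, zero_mul])]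
  have hUa : ∀ x y : Fin 2, (Function.update (Function.update s a x) b y) a = x := by
    intro x y; rw [Function.update_of_ne hab, Function.update_self]
  have hUb : ∀ x y : Fin 2, (Function.update (Function.update s a x) b y) b = y := by
    intro x y; rw [Function.update_self]
  have hδ1 : ∀ x y : Fin 2, ∀ k, k ≠ a → k ≠ b →
      s k = (Function.update (Function.update s a x) b y) k := by
    intro x y k hka hkb
    rw [Function.update_of_ne hkb, Function.update_of_ne hka]
  have hδ2 : ∀ x y : Fin 2,
      (∀ k, k ≠ a → k ≠ b → (Function.update (Function.update s a x) b y) k = t k)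
        ↔ (∀ k, k ≠ a → k ≠ b → s k = t k) := by
    intro x y
    constructor
    · intro hc k hka hkb
      have := hc k hka hkb
      rwa [Function.update_of_ne hkb, Function.update_of_ne hka] at this
    · intro hc k hka hkb
      rw [Function.update_of_ne hkb, Function.update_of_ne hka]
      exact hc k hka hkb
  have hterm : ∀ x y : Fin 2,
      twoSite Q a b s (Function.update (Function.update s a x) b y) *
        twoSite Q' a b (Function.update (Function.update s a x) b y) t
      = Q (s a, s b) (x, y) * Q' (x, y) (t a, t b) *
          (if ∀ k, k ≠ a → k ≠ b → s k = t k then 1 else 0) := by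
    intro x y
    unfold twoSite
    rw [hUa, hUb, if_pos (hδ1 x y), if_congr (hδ2 x y) rfl rfl]
    ring
  calc ∑ x : Fin 2, ∑ y : Fin 2,
        twoSite Q a b s (Function.update (Function.update s a x) b y) *
          twoSite Q' a b (Function.update (Function.update s a x) b y) t
      = ∑ x : Fin 2, ∑ y : Fin 2, Q (s a, s b) (x, y) * Q' (x, y) (t a, t b) *
          (if ∀ k, k ≠ a → k ≠ b → s k = t k then 1 else 0) := by
        apply Finset.sum_congr rfl; intro x _
        apply Finset.sum_congr rfl; intro y _
        exact hterm x y
    _ = twoSite (Q * Q') a b s t := by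
        unfold twoSite
        rw [Matrix.mul_apply, Fintype.sum_prod_type]
        rw [Finset.sum_mul]
        apply Finset.sum_congr rfl; intro x _
        rw [Finset.sum_mul]

lemma twoSite_smul_one {a b : Fin M} (hab : a ≠ b) (c : ℂ) :
    twoSite (c • (1 : Matrix (Fin 2 × Fin 2) (Fin 2 × Fin 2) ℂ)) a b
      = c • (1 : Matrix (Spins M) (Spins M) ℂ) := by
  ext s t
  unfold twoSite
  rw [Matrix.smul_apply, Matrix.smul_apply]
  by_cases h : s = t
  · subst h
    rw [Matrix.one_apply_eq, Matrix.one_apply_eq, if_pos (fun k _ _ => rfl)]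
    simp
  · rw [Matrix.one_apply_ne h]
    by_cases h1 : ((s a, s b) : Fin 2 × Fin 2) = (t a, t b)
    · by_cases h2 : ∀ k, k ≠ a → k ≠ b → s k = t k
      · exfalso; apply h; funext k
        by_cases hka : k = a
        · subst hka; exact congrArg Prod.fst h1
        · by_cases hkb : k = b
          · subst hkb; exact congrArg Prod.snd h1
          · exact h2 k hka hkb
      · rw [if_neg h2]; simp
    · rw [Matrix.one_apply_ne h1]; simp

lemma twoSite_swap (Q : Matrix (Fin 2 × Fin 2) (Fin 2 × Fin 2) ℂ) (a b : Fin M) :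
    twoSite Q a b = twoSite (fun p q => Q (p.2, p.1) (q.2, q.1)) b a := by
  ext s t
  unfold twoSite
  have hiff : (∀ k, k ≠ a → k ≠ b → s k = t k) ↔ (∀ k, k ≠ b → k ≠ a → s k = t k) :=
    ⟨fun h k h1 h2 => h k h2 h1, fun h k h1 h2 => h k h2 h1⟩
  rw [if_congr hiff rfl rfl]

lemma hsum2 (G : Fin 2 → Fin 2 → ℂ) (c d : Fin 2) :
    (∑ x : Fin 2, ∑ y : Fin 2,
      G x y * (if x = c then (if y = d then (1 : ℂ) else 0) else 0)) = G c d := by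
  fin_cases c <;> fin_cases d <;> simp [Fin.sum_univ_two]

lemma hsum2' (G : Fin 2 → Fin 2 → ℂ) (c d : Fin 2) :
    (∑ x : Fin 2, ∑ y : Fin 2,
      G x y * (if c = x then (if d = y then (1 : ℂ) else 0) else 0)) = G c d := by
  fin_cases c <;> fin_cases d <;> simp [Fin.sum_univ_two]

lemma collapse4 {a b : Fin M} (hab : a ≠ b) (w : Spins M) (x y : Fin 2) :
    Function.update (Function.update
      (Function.update (Function.update w a x) b y) a 0) b 0
    = Function.update (Function.update w a 0) b 0 := by
  funext k
  by_cases hkb : k = b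
  · subst hkb; simp
  · rw [Function.update_of_ne hkb, Function.update_of_ne hkb]
    by_cases hka : k = a
    · subst hka; simp
    · rw [Function.update_of_ne hka, Function.update_of_ne hka,
        Function.update_of_ne hkb, Function.update_of_ne hka]

lemma twoSite_comm {a b : Fin M} (hab : a ≠ b)
    (Q : Matrix (Fin 2 × Fin 2) (Fin 2 × Fin 2) ℂ)
    {Z : Matrix (Spins M) (Spins M) ℂ} (hZa : Htriv a Z) (hZb : Htriv b Z) :
    twoSite Q a b * Z = Z * twoSite Q a b := by
  ext s t
  rw [Matrix.mul_apply, Matrix.mul_apply]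
  rw [sum_agree_two a b hab s _ (by
    intro u hu
    by_cases hc : ∀ k, k ≠ a → k ≠ b → s k = u k
    · exact absurd (fun k h1 h2 => (hc k h1 h2).symm) hu
    · unfold twoSite; rw [if_neg hc, mul_zero, zero_mul])]
  rw [sum_agree_two a b hab t (fun u => Z s u * twoSite Q a b u t) (by
    intro u hu
    unfold twoSite
    simp only [if_neg hu, mul_zero])]
  set Zc := Z (Function.update (Function.update s a 0) b 0)
    (Function.update (Function.update t a 0) b 0) with hZc
  have hUa : ∀ (w : Spins M) (x y : Fin 2),
      (Function.update (Function.update w a x) b y) a = x := by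
    intro w x y; rw [Function.update_of_ne hab, Function.update_self]
  have hUb : ∀ (w : Spins M) (x y : Fin 2),
      (Function.update (Function.update w a x) b y) b = y := by
    intro w x y; rw [Function.update_self]
  have e1 : ∀ x y : Fin 2, Z (Function.update (Function.update s a x) b y) t
      = (if x = t a then (if y = t b then (1 : ℂ) else 0) else 0) * Zc := by
    intro x y
    rw [hZa (Function.update (Function.update s a x) b y) t]
    rw [hZb (Function.update (Function.update (Function.update s a x) b y) a 0)
      (Function.update t a 0)]
    rw [collapse4 hab]
    simp only [Function.update_self, Function.update_of_ne hab, Function.update_of_ne hab.symm]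
    split_ifs <;> simp [hZc]
  have e2 : ∀ x y : Fin 2, Z s (Function.update (Function.update t a x) b y)
      = (if s a = x then (if s b = y then (1 : ℂ) else 0) else 0) * Zc := by
    intro x y
    rw [hZa s (Function.update (Function.update t a x) b y)]
    rw [hZb (Function.update s a 0)
      (Function.update (Function.update (Function.update t a x) b y) a 0)]
    rw [collapse4 hab]
    simp only [Function.update_self, Function.update_of_ne hab, Function.update_of_ne hab.symm]
    split_ifs <;> simp [hZc]
  have hδ1 : ∀ (w : Spins M) (x y : Fin 2), ∀ k, k ≠ a → k ≠ b →
      w k = (Function.update (Function.update w a x) b y) k := by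
    intro w x y k hka hkb
    rw [Function.update_of_ne hkb, Function.update_of_ne hka]
  calc ∑ x : Fin 2, ∑ y : Fin 2,
        twoSite Q a b s (Function.update (Function.update s a x) b y) *
          Z (Function.update (Function.update s a x) b y) t
      = ∑ x : Fin 2, ∑ y : Fin 2, (Q (s a, s b) (x, y) * Zc) *
          (if x = t a then (if y = t b then (1 : ℂ) else 0) else 0) := by
        apply Finset.sum_congr rfl; intro x _
        apply Finset.sum_congr rfl; intro y _
        unfold twoSite
        rw [hUa, hUb, if_pos (hδ1 s x y), e1]
        ring
    _ = Q (s a, s b) (t a, t b) * Zc := by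
        have := hsum2 (fun x y => Q (s a, s b) (x, y) * Zc) (t a) (t b)
        simpa using this
    _ = ∑ x : Fin 2, ∑ y : Fin 2,
          Z s (Function.update (Function.update t a x) b y) *
            twoSite Q a b (Function.update (Function.update t a x) b y) t := by
        rw [show (∑ x : Fin 2, ∑ y : Fin 2,
            Z s (Function.update (Function.update t a x) b y) *
              twoSite Q a b (Function.update (Function.update t a x) b y) t)
          = ∑ x : Fin 2, ∑ y : Fin 2, (Zc * Q ((x : Fin 2), (y : Fin 2)) (t a, t b)) *
              (if s a = x then (if s b = y then (1 : ℂ) else 0) else 0) from ?_]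
        · have := hsum2' (fun x y => Zc * Q ((x : Fin 2), (y : Fin 2)) (t a, t b)) (s a) (s b)
          rw [this]
          ring
        · apply Finset.sum_congr rfl; intro x _
          apply Finset.sum_congr rfl; intro y _
          unfold twoSite
          rw [hUa, hUb,
            if_pos (show ∀ k, k ≠ a → k ≠ b →
                Function.update (Function.update t a x) b y k = t k
              from fun k hka hkb => (hδ1 t x y k hka hkb).symm),
            e2]
          ring


lemma hsum1 (G : Fin 2 → ℂ) (c : Fin 2) :
    (∑ x : Fin 2, G x * (if x = c then (1 : ℂ) else 0)) = G c := by
  fin_cases c <;> simp [Fin.sum_univ_two]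

lemma hsum1' (G : Fin 2 → ℂ) (c : Fin 2) :
    (∑ x : Fin 2, G x * (if c = x then (1 : ℂ) else 0)) = G c := by
  fin_cases c <;> simp [Fin.sum_univ_two]

lemma hsum1l (G : Fin 2 → ℂ) (c : Fin 2) :
    (∑ x : Fin 2, (if c = x then (1 : ℂ) else 0) * G x) = G c := by
  fin_cases c <;> simp [Fin.sum_univ_two]

lemma hsum1l' (G : Fin 2 → ℂ) (c : Fin 2) :
    (∑ x : Fin 2, (if x = c then (1 : ℂ) else 0) * G x) = G c := by
  fin_cases c <;> simp [Fin.sum_univ_two]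

lemma pauliAt_comm (P : Matrix (Fin 2) (Fin 2) ℂ) (m : Fin M)
    {Z : Matrix (Spins M) (Spins M) ℂ} (hZ : Htriv m Z) :
    pauliAt M P m * Z = Z * pauliAt M P m := by
  ext s t
  rw [Matrix.mul_apply, Matrix.mul_apply]
  rw [sum_agree_one m s _ (by
    intro u hu
    by_cases hc : ∀ k, k ≠ m → s k = u k
    · exact absurd (fun k h1 => (hc k h1).symm) hu
    · unfold pauliAt; rw [if_neg hc, mul_zero, zero_mul])]
  rw [sum_agree_one m t (fun u => Z s u * pauliAt M P m u t) (by
    intro u hu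
    unfold pauliAt
    simp only [if_neg hu, mul_zero])]
  set Zc := Z (Function.update s m 0) (Function.update t m 0) with hZcdef
  have e1 : ∀ x : Fin 2, Z (Function.update s m x) t
      = (if x = t m then (1 : ℂ) else 0) * Zc := by
    intro x
    rw [hZ (Function.update s m x) t]
    simp only [Function.update_self, Function.update_idem]
    split_ifs <;> simp [hZcdef]
  have e2 : ∀ x : Fin 2, Z s (Function.update t m x)
      = (if s m = x then (1 : ℂ) else 0) * Zc := by
    intro x
    rw [hZ s (Function.update t m x)]
    simp only [Function.update_self, Function.update_idem]
    split_ifs <;> simp [hZcdef]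
  calc ∑ x : Fin 2, pauliAt M P m s (Function.update s m x) * Z (Function.update s m x) t
      = ∑ x : Fin 2, (P (s m) x * Zc) * (if x = t m then (1 : ℂ) else 0) := by
        apply Finset.sum_congr rfl; intro x _
        unfold pauliAt
        rw [Function.update_self,
          if_pos (show ∀ k, k ≠ m → s k = Function.update s m x k by
            intro k hk; rw [Function.update_of_ne hk]), e1]
        ring
    _ = P (s m) (t m) * Zc := hsum1 (fun x => P (s m) x * Zc) (t m)
    _ = ∑ x : Fin 2, Z s (Function.update t m x) * pauliAt M P m (Function.update t m x) t := by
        rw [show (∑ x : Fin 2, Z s (Function.update t m x) *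
              pauliAt M P m (Function.update t m x) t)
            = ∑ x : Fin 2, (Zc * P x (t m)) * (if s m = x then (1 : ℂ) else 0) from ?_]
        · rw [hsum1' (fun x => Zc * P x (t m)) (s m)]
          ring
        · apply Finset.sum_congr rfl; intro x _
          unfold pauliAt
          rw [Function.update_self,
            if_pos (show ∀ k, k ≠ m → Function.update t m x k = t k by
              intro k hk; rw [Function.update_of_ne hk]), e2]
          ring

lemma pauliAt_one (m : Fin M) :
    pauliAt M (1 : Matrix (Fin 2) (Fin 2) ℂ) m = (1 : Matrix (Spins M) (Spins M) ℂ) := by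
  ext s t
  unfold pauliAt
  by_cases h : s = t
  · subst h
    rw [Matrix.one_apply_eq, Matrix.one_apply_eq, if_pos (fun k _ => rfl), mul_one]
  · rw [Matrix.one_apply_ne h]
    by_cases h1 : s m = t m
    · by_cases h2 : ∀ k, k ≠ m → s k = t k
      · exfalso; apply h; funext k
        by_cases hk : k = m
        · subst hk; exact h1
        · exact h2 k hk
      · rw [if_neg h2, mul_zero]
    · rw [Matrix.one_apply_ne h1, zero_mul]

lemma kron0_one :
    (kron0 (1 : Matrix (Fin 2) (Fin 2) ℂ) :
      Matrix (Fin 2 × Spins M) (Fin 2 × Spins M) ℂ) = 1 := by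
  ext p q
  unfold kron0
  by_cases h1 : p.1 = q.1 <;> by_cases h2 : p.2 = q.2 <;>
    simp [Matrix.one_apply, Prod.ext_iff, h1, h2]

/-! ### Auxiliary space machinery -/

/-- `X` (on `ℂ² ⊗ H`) acts trivially on site `m`. -/
def Triv0 (m : Fin M) (X : Matrix (Fin 2 × Spins M) (Fin 2 × Spins M) ℂ) : Prop :=
  ∀ i s c t, X (i, s) (c, t) = if s m = t m
    then X (i, Function.update s m 0) (c, Function.update t m 0) else 0

/-- substitute the auxiliary space by site `j`. -/
def plug (j : Fin M) (X : Matrix (Fin 2 × Spins M) (Fin 2 × Spins M) ℂ) :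
    Matrix (Spins M) (Spins M) ℂ :=
  fun s t => X (s j, Function.update s j (t j)) (t j, t)

/-- the permutation between the auxiliary space and site `j`. -/
def Sw (j : Fin M) : Matrix (Fin 2 × Spins M) (Fin 2 × Spins M) ℂ :=
  fun p q => if p.1 = q.2 j ∧ q.1 = p.2 j ∧ (∀ k, k ≠ j → p.2 k = q.2 k) then 1 else 0

/-- `1 ⊗ Z` on `ℂ² ⊗ H`. -/
def auxLift (Z : Matrix (Spins M) (Spins M) ℂ) :
    Matrix (Fin 2 × Spins M) (Fin 2 × Spins M) ℂ :=
  fun p q => (if p.1 = q.1 then (1 : ℂ) else 0) * Z p.2 q.2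

lemma Triv0_mul {m : Fin M} {X Y : Matrix (Fin 2 × Spins M) (Fin 2 × Spins M) ℂ}
    (hX : Triv0 m X) (hY : Triv0 m Y) : Triv0 m (X * Y) := by
  intro i s c t
  by_cases h : s m = t m
  · rw [if_pos h, Matrix.mul_apply, Matrix.mul_apply, Fintype.sum_prod_type,
      Fintype.sum_prod_type]
    apply Finset.sum_congr rfl
    intro b _
    have hL : ∀ u : Spins M, u m ≠ t m → X (i, s) (b, u) * Y (b, u) (c, t) = 0 := by
      intro u hu
      rw [hY b u c t, if_neg hu, mul_zero]
    rw [sum_slice m (t m) _ hL]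
    have hR : ∀ u : Spins M, u m ≠ (0 : Fin 2) →
        X (i, Function.update s m 0) (b, u) * Y (b, u) (c, Function.update t m 0) = 0 := by
      intro u hu
      rw [hY b u c (Function.update t m 0)]
      simp [hu]
    rw [sum_slice m 0 _ hR]
    apply Finset.sum_congr rfl
    intro u _
    by_cases h0 : u m = 0
    · rw [if_pos h0, if_pos h0]
      have hu0 : Function.update u m (0 : Fin 2) = u := by
        rw [← h0, Function.update_eq_self]
      have e1 : X (i, s) (b, Function.update u m (t m))
          = X (i, Function.update s m 0) (b, u) := by
        rw [hX i s b (Function.update u m (t m))]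
        rw [if_pos (by rw [Function.update_self]; exact h)]
        rw [Function.update_idem, hu0]
      have e2 : Y (b, Function.update u m (t m)) (c, t)
          = Y (b, u) (c, Function.update t m 0) := by
        rw [hY b (Function.update u m (t m)) c t]
        rw [if_pos (Function.update_self m (t m) u)]
        rw [Function.update_idem, hu0]
      rw [e1, e2, hu0]
    · rw [if_neg h0, if_neg h0]
  · rw [if_neg h, Matrix.mul_apply]
    apply Finset.sum_eq_zero
    intro p _
    obtain ⟨b, u⟩ := p
    by_cases hu : u m = t m
    · rw [hX i s b u, if_neg (by rw [hu]; exact h), zero_mul]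
    · rw [hY b u c t, if_neg hu, mul_zero]

lemma Triv0_Lop {m m' : Fin M} (hmm : m' ≠ m) (η : ℂ) (ξ : Fin M → ℂ) (lam : ℂ) :
    Triv0 m (Lop M η ξ m' lam) := by
  intro i s c t
  by_cases h : s m = t m
  · rw [if_pos h]
    unfold Lop
    simp only
    rw [Function.update_of_ne hmm, Function.update_of_ne hmm]
    congr 1
    by_cases hd : ∀ k, k ≠ m' → s k = t k
    · rw [if_pos hd, if_pos]
      intro k hk
      by_cases hkm : k = m
      · subst hkm; simp
      · rw [Function.update_of_ne hkm, Function.update_of_ne hkm]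
        exact hd k hk
    · rw [if_neg hd, if_neg]
      intro hc
      apply hd
      intro k hk
      by_cases hkm : k = m
      · subst hkm; exact h
      · have := hc k hk
        rwa [Function.update_of_ne hkm, Function.update_of_ne hkm] at this
  · rw [if_neg h]
    unfold Lop
    simp only
    rw [if_neg, mul_zero]
    intro hc
    exact h (hc m (Ne.symm hmm))

lemma Triv0_kron0 (m : Fin M) (P : Matrix (Fin 2) (Fin 2) ℂ) :
    Triv0 m (kron0 P : Matrix (Fin 2 × Spins M) (Fin 2 × Spins M) ℂ) := by
  intro i s c t
  unfold kron0
  simp only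
  by_cases h : s m = t m
  · rw [if_pos h]
    congr 1
    by_cases hst : s = t
    · subst hst
      rw [if_pos rfl, if_pos rfl]
    · rw [if_neg hst, if_neg]
      intro hc
      apply hst
      funext k
      by_cases hk : k = m
      · subst hk; exact h
      · have := congrFun hc k
        rwa [Function.update_of_ne hk, Function.update_of_ne hk] at this
  · rw [if_neg h, if_neg, mul_zero]
    intro hc
    exact h (by rw [hc])

lemma Triv0_one (m : Fin M) :
    Triv0 m (1 : Matrix (Fin 2 × Spins M) (Fin 2 × Spins M) ℂ) := by
  have := Triv0_kron0 (M := M) m 1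
  rwa [kron0_one] at this

lemma Triv0_smul {m : Fin M} (c : ℂ) {X : Matrix (Fin 2 × Spins M) (Fin 2 × Spins M) ℂ}
    (hX : Triv0 m X) : Triv0 m (c • X) := by
  intro i s c' t
  simp only [Matrix.smul_apply]
  rw [hX i s c' t]
  split_ifs <;> simp


lemma Lop_swap (η : ℂ) (ξ : Fin M → ℂ) (j : Fin M) :
    Lop M η ξ j (ξ j) = Complex.sinh η • Sw j := by
  ext p q
  obtain ⟨i, s⟩ := p
  obtain ⟨c, t⟩ := q
  show Rmat η (ξ j - ξ j) (i, s j) (c, t j) *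
      (if ∀ k, k ≠ j → s k = t k then (1 : ℂ) else 0) = _
  rw [sub_self, Rmat_zero]
  show Complex.sinh η • swapQ (i, s j) (c, t j) *
      (if ∀ k, k ≠ j → s k = t k then (1 : ℂ) else 0)
    = Complex.sinh η •
        (if i = t j ∧ c = s j ∧ (∀ k, k ≠ j → s k = t k) then (1 : ℂ) else 0)
  unfold swapQ
  simp only [smul_eq_mul]
  by_cases hA : i = t j ∧ s j = c
  · by_cases hB : ∀ k, k ≠ j → s k = t k
    · rw [if_pos hA, if_pos hB, if_pos ⟨hA.1, hA.2.symm, hB⟩]; ring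
    · rw [if_pos hA, if_neg hB,
        if_neg (show ¬(i = t j ∧ c = s j ∧ ∀ k, k ≠ j → s k = t k) from
          fun hc => hB hc.2.2)]
      ring
  · rw [if_neg hA,
      if_neg (show ¬(i = t j ∧ c = s j ∧ ∀ k, k ≠ j → s k = t k) from
        fun hc => hA ⟨hc.1, hc.2.1.symm⟩)]
    ring

lemma plug_mul {j : Fin M} {X Y : Matrix (Fin 2 × Spins M) (Fin 2 × Spins M) ℂ}
    (hX : Triv0 j X) (hY : Triv0 j Y) :
    plug j (X * Y) = plug j X * plug j Y := by
  ext s t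
  show (X * Y) (s j, Function.update s j (t j)) (t j, t) = _
  rw [Matrix.mul_apply, Matrix.mul_apply, Fintype.sum_prod_type]
  rw [sum_fiber j (fun u => plug j X s u * plug j Y u t)]
  apply Finset.sum_congr rfl
  intro b _
  have hvan : ∀ u : Spins M, u j ≠ t j →
      X (s j, Function.update s j (t j)) (b, u) * Y (b, u) (t j, t) = 0 := by
    intro u hu
    rw [hX (s j) (Function.update s j (t j)) b u,
      if_neg (by rw [Function.update_self]; exact fun hc => hu hc.symm), zero_mul]
  rw [sum_slice j (t j) _ hvan]
  apply Finset.sum_congr rfl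
  intro u _
  by_cases h0 : u j = 0
  · rw [if_pos h0, if_pos h0]
    have hu0 : Function.update u j (0 : Fin 2) = u := by
      rw [← h0, Function.update_eq_self]
    show X (s j, Function.update s j (t j)) (b, Function.update u j (t j)) *
        Y (b, Function.update u j (t j)) (t j, t)
      = plug j X s (Function.update u j b) * plug j Y (Function.update u j b) t
    unfold plug
    simp only [Function.update_self, Function.update_idem]
    have eX : X (s j, Function.update s j (t j)) (b, Function.update u j (t j))
        = X (s j, Function.update s j b) (b, Function.update u j b) := by
      rw [hX (s j) (Function.update s j (t j)) b (Function.update u j (t j)),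
        hX (s j) (Function.update s j b) b (Function.update u j b)]
      simp only [Function.update_self, Function.update_idem, eq_self_iff_true, if_true]
    rw [eX]
  · rw [if_neg h0, if_neg h0]

lemma plug_Lop {j m : Fin M} (hmj : m ≠ j) (η : ℂ) (ξ : Fin M → ℂ) (lam : ℂ) :
    plug j (Lop M η ξ m lam) = twoSite (Rmat η (lam - ξ m)) j m := by
  ext s t
  unfold plug Lop twoSite
  simp only
  rw [Function.update_of_ne hmj]
  congr 1
  have hiff : (∀ k, k ≠ m → Function.update s j (t j) k = t k)
      ↔ (∀ k, k ≠ j → k ≠ m → s k = t k) := by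
    constructor
    · intro h k hkj hkm
      have := h k hkm
      rwa [Function.update_of_ne hkj] at this
    · intro h k hkm
      by_cases hkj : k = j
      · subst hkj; rw [Function.update_self]
      · rw [Function.update_of_ne hkj]; exact h k hkj hkm
  rw [if_congr hiff rfl rfl]

lemma plug_kron0 (j : Fin M) (P : Matrix (Fin 2) (Fin 2) ℂ) :
    plug j (kron0 P) = pauliAt M P j := by
  ext s t
  unfold plug kron0 pauliAt
  simp only
  congr 1
  have hiff : (Function.update s j (t j) = t) ↔ (∀ k, k ≠ j → s k = t k) := by
    constructor
    · intro h k hk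
      have := congrFun h k
      rwa [Function.update_of_ne hk] at this
    · intro h
      funext k
      by_cases hk : k = j
      · subst hk; rw [Function.update_self]
      · rw [Function.update_of_ne hk]; exact h k hk
  rw [if_congr hiff rfl rfl]

lemma plug_one (j : Fin M) :
    plug j (1 : Matrix (Fin 2 × Spins M) (Fin 2 × Spins M) ℂ) = 1 := by
  rw [← kron0_one, plug_kron0, pauliAt_one]

lemma Htriv_plug {j m : Fin M} (hmj : m ≠ j)
    {X : Matrix (Fin 2 × Spins M) (Fin 2 × Spins M) ℂ} (hX : Triv0 m X) :
    Htriv m (plug j X) := by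
  intro s t
  unfold plug
  rw [hX (s j) (Function.update s j (t j)) (t j) t]
  have hc : Function.update s j (t j) m = s m := by
    rw [Function.update_of_ne hmj]
  rw [hc]
  by_cases h : s m = t m
  · rw [if_pos h, if_pos h]
    simp only [Function.update_of_ne (Ne.symm hmj)]
    rw [Function.update_comm (Ne.symm hmj)]
  · rw [if_neg h, if_neg h]

lemma Sw_mul_triv {j : Fin M} {Lo : Matrix (Fin 2 × Spins M) (Fin 2 × Spins M) ℂ}
    (hLo : Triv0 j Lo) :
    Sw j * Lo = auxLift (plug j Lo) * Sw j := by
  ext p q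
  obtain ⟨i, s⟩ := p
  obtain ⟨c, t⟩ := q
  rw [Matrix.mul_apply, Matrix.mul_apply]
  rw [Finset.sum_eq_single ((s j, Function.update s j i) : Fin 2 × Spins M)
    (by
      rintro ⟨b, u⟩ _ hne
      unfold Sw
      rw [if_neg, zero_mul]
      rintro ⟨hA, hB, hC⟩
      apply hne
      refine Prod.ext_iff.mpr ⟨hB, ?_⟩
      show u = Function.update s j i
      funext k
      by_cases hk : k = j
      · subst hk; rw [Function.update_self]; exact hA.symm
      · rw [Function.update_of_ne hk]; exact (hC k hk).symm)
    (by intro h; exact absurd (Finset.mem_univ _) h)]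
  rw [Finset.sum_eq_single ((t j, Function.update t j c) : Fin 2 × Spins M)
    (by
      rintro ⟨b, u⟩ _ hne
      unfold Sw
      rw [if_neg, mul_zero]
      rintro ⟨hA, hB, hC⟩
      apply hne
      refine Prod.ext_iff.mpr ⟨hA, ?_⟩
      show u = Function.update t j c
      funext k
      by_cases hk : k = j
      · subst hk; rw [Function.update_self]; exact hB.symm
      · rw [Function.update_of_ne hk]; exact hC k hk)
    (by intro h; exact absurd (Finset.mem_univ _) h)]
  unfold Sw auxLift plug
  rw [if_pos (show i = Function.update s j i j ∧ s j = s j ∧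
      (∀ k, k ≠ j → s k = Function.update s j i k) by
    refine ⟨?_, rfl, ?_⟩
    · rw [Function.update_self]
    · intro k hk; rw [Function.update_of_ne hk])]
  rw [if_pos (show t j = t j ∧ c = Function.update t j c j ∧
      (∀ k, k ≠ j → Function.update t j c k = t k) by
    refine ⟨rfl, ?_, ?_⟩
    · rw [Function.update_self]
    · intro k hk; rw [Function.update_of_ne hk])]
  simp only [Function.update_self]
  rw [hLo (s j) (Function.update s j i) c t,
    hLo (s j) (Function.update s j c) c (Function.update t j c)]
  simp only [Function.update_self, Function.update_idem]
  by_cases h : i = t j <;> simp [h]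

lemma ptrace0_pull (Z : Matrix (Spins M) (Spins M) ℂ)
    (Y : Matrix (Fin 2 × Spins M) (Fin 2 × Spins M) ℂ) :
    ptrace0 (auxLift Z * Y) = Z * ptrace0 Y := by
  ext s t
  unfold ptrace0
  have key : ∀ i : Fin 2, (auxLift Z * Y) (i, s) (i, t) = ∑ u : Spins M, Z s u * Y (i, u) (i, t) := by
    intro i
    rw [Matrix.mul_apply, Fintype.sum_prod_type]
    rw [Finset.sum_eq_single i
      (by
        intro b _ hne
        apply Finset.sum_eq_zero
        intro u _
        unfold auxLift
        simp only
        rw [if_neg (Ne.symm hne), zero_mul, zero_mul])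
      (by intro h; exact absurd (Finset.mem_univ _) h)]
    apply Finset.sum_congr rfl
    intro u _
    unfold auxLift
    simp
  calc (∑ i : Fin 2, (auxLift Z * Y) (i, s) (i, t))
      = ∑ i : Fin 2, ∑ u : Spins M, Z s u * Y (i, u) (i, t) := by
        exact Finset.sum_congr rfl (fun i _ => key i)
    _ = ∑ u : Spins M, ∑ i : Fin 2, Z s u * Y (i, u) (i, t) := Finset.sum_comm
    _ = ∑ u : Spins M, Z s u * ∑ i : Fin 2, Y (i, u) (i, t) := by
        exact Finset.sum_congr rfl (fun u _ => (Finset.mul_sum _ _ _).symm)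
    _ = (Z * ptrace0 Y) s t := by rw [Matrix.mul_apply]; rfl

lemma ptrace0_sw {j : Fin M} {X : Matrix (Fin 2 × Spins M) (Fin 2 × Spins M) ℂ}
    (hX : Triv0 j X) :
    ptrace0 (X * Sw j) = plug j X := by
  ext s t
  unfold ptrace0
  have key : ∀ i : Fin 2, (X * Sw j) (i, s) (i, t)
      = X (i, s) (t j, Function.update t j i) := by
    intro i
    rw [Matrix.mul_apply]
    rw [Finset.sum_eq_single ((t j, Function.update t j i) : Fin 2 × Spins M)
      (by
        rintro ⟨b, u⟩ _ hne
        unfold Sw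
        rw [if_neg, mul_zero]
        rintro ⟨hA, hB, hC⟩
        apply hne
        refine Prod.ext_iff.mpr ⟨hA, ?_⟩
        show u = Function.update t j i
        funext k
        by_cases hk : k = j
        · subst hk; rw [Function.update_self]; exact hB.symm
        · rw [Function.update_of_ne hk]; exact hC k hk)
      (by intro h; exact absurd (Finset.mem_univ _) h)]
    unfold Sw
    rw [if_pos (show t j = t j ∧ i = Function.update t j i j ∧
        (∀ k, k ≠ j → Function.update t j i k = t k) by
      refine ⟨rfl, ?_, ?_⟩
      · rw [Function.update_self]
      · intro k hk; rw [Function.update_of_ne hk]), mul_one]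
  calc (∑ i : Fin 2, (X * Sw j) (i, s) (i, t))
      = ∑ i : Fin 2, X (i, s) (t j, Function.update t j i) := by
        exact Finset.sum_congr rfl (fun i _ => key i)
    _ = ∑ i : Fin 2, if s j = i
          then X (s j, Function.update s j 0) (t j, Function.update t j 0) else 0 := by
        apply Finset.sum_congr rfl
        intro i _
        rw [hX i s (t j) (Function.update t j i)]
        simp only [Function.update_self, Function.update_idem]
        by_cases h : s j = i
        · rw [if_pos h, if_pos h, ← h]
        · rw [if_neg h, if_neg h]
    _ = X (s j, Function.update s j 0) (t j, Function.update t j 0) := by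
        rw [Finset.sum_ite_eq Finset.univ (s j)
          (fun _ => X (s j, Function.update s j 0) (t j, Function.update t j 0))]
        simp
    _ = plug j X s t := by
        unfold plug
        rw [hX (s j) (Function.update s j (t j)) (t j) t]
        simp [Function.update_self, Function.update_idem]

lemma auxLift_kron0_comm (Z : Matrix (Spins M) (Spins M) ℂ) (P : Matrix (Fin 2) (Fin 2) ℂ) :
    (kron0 P : Matrix (Fin 2 × Spins M) (Fin 2 × Spins M) ℂ) * auxLift Z
      = auxLift Z * kron0 P := by
  ext p q
  obtain ⟨i, s⟩ := p
  obtain ⟨c, t⟩ := q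
  rw [Matrix.mul_apply, Matrix.mul_apply]
  rw [Finset.sum_eq_single ((c, s) : Fin 2 × Spins M)
    (by
      rintro ⟨b, u⟩ _ hne
      unfold kron0 auxLift
      simp only
      by_cases h1 : s = u
      · subst h1
        have hbc : b ≠ c := fun h2 => hne (by rw [h2])
        simp [hbc]
      · simp [h1])
    (by intro h; exact absurd (Finset.mem_univ _) h)]
  rw [Finset.sum_eq_single ((i, t) : Fin 2 × Spins M)
    (by
      rintro ⟨b, u⟩ _ hne
      unfold kron0 auxLift
      simp only
      by_cases h1 : i = b
      · subst h1
        have hut : u ≠ t := fun h2 => hne (by rw [h2])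
        simp [hut]
      · simp [h1])
    (by intro h; exact absurd (Finset.mem_univ _) h)]
  unfold kron0 auxLift
  simp [mul_comm]

lemma auxLift_Lop_comm {m : Fin M} {Z : Matrix (Spins M) (Spins M) ℂ} (hZ : Htriv m Z)
    (η : ℂ) (ξ : Fin M → ℂ) (lam : ℂ) :
    auxLift Z * Lop M η ξ m lam = Lop M η ξ m lam * auxLift Z := by
  ext p q
  obtain ⟨i, s⟩ := p
  obtain ⟨c, t⟩ := q
  rw [Matrix.mul_apply, Matrix.mul_apply, Fintype.sum_prod_type, Fintype.sum_prod_type]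
  rw [Finset.sum_eq_single i
    (by
      intro b _ hne
      apply Finset.sum_eq_zero
      intro u _
      unfold auxLift
      simp only
      rw [if_neg (Ne.symm hne), zero_mul, zero_mul])
    (by intro h; exact absurd (Finset.mem_univ _) h)]
  rw [Finset.sum_eq_single c
    (by
      intro b _ hne
      apply Finset.sum_eq_zero
      intro u _
      unfold auxLift
      simp only
      rw [if_neg hne, zero_mul, mul_zero])
    (by intro h; exact absurd (Finset.mem_univ _) h)]
  set Zc := Z (Function.update s m 0) (Function.update t m 0) with hZcdef
  have hL : ∑ u : Spins M, auxLift Z (i, s) (i, u) * Lop M η ξ m lam (i, u) (c, t)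
      = Rmat η (lam - ξ m) (i, s m) (c, t m) * Zc := by
    rw [sum_agree_one m t _ (by
      intro u hu
      unfold Lop
      simp only [if_neg hu, mul_zero])]
    have hterm : ∀ x : Fin 2,
        auxLift Z (i, s) (i, Function.update t m x) *
          Lop M η ξ m lam (i, Function.update t m x) (c, t)
        = (if s m = x then (1 : ℂ) else 0) *
            (Rmat η (lam - ξ m) (i, x) (c, t m) * Zc) := by
      intro x
      unfold auxLift Lop
      simp only [Function.update_self, eq_self_iff_true, if_true, one_mul]
      rw [if_pos (show ∀ k, k ≠ m → Function.update t m x k = t k by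
        intro k hk; rw [Function.update_of_ne hk]), mul_one]
      rw [hZ s (Function.update t m x)]
      simp only [Function.update_self, Function.update_idem, ← hZcdef]
      split_ifs <;> ring
    rw [Finset.sum_congr rfl (fun x _ => hterm x)]
    exact hsum1l (fun x => Rmat η (lam - ξ m) (i, x) (c, t m) * Zc) (s m)
  have hR : ∑ u : Spins M, Lop M η ξ m lam (i, s) (c, u) * auxLift Z (c, u) (c, t)
      = Rmat η (lam - ξ m) (i, s m) (c, t m) * Zc := by
    rw [sum_agree_one m s _ (by
      intro u hu
      by_cases hc : ∀ k, k ≠ m → s k = u k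
      · exact absurd (fun k h1 => (hc k h1).symm) hu
      · unfold Lop
        simp only [if_neg hc, mul_zero, zero_mul])]
    have hterm : ∀ x : Fin 2,
        Lop M η ξ m lam (i, s) (c, Function.update s m x) *
          auxLift Z (c, Function.update s m x) (c, t)
        = (if x = t m then (1 : ℂ) else 0) *
            (Rmat η (lam - ξ m) (i, s m) (c, x) * Zc) := by
      intro x
      unfold auxLift Lop
      simp only [Function.update_self, eq_self_iff_true, if_true, one_mul]
      rw [if_pos (show ∀ k, k ≠ m → s k = Function.update s m x k by
        intro k hk; rw [Function.update_of_ne hk]), mul_one]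
      rw [hZ (Function.update s m x) t]
      simp only [Function.update_self, Function.update_idem, ← hZcdef]
      split_ifs <;> ring
    rw [Finset.sum_congr rfl (fun x _ => hterm x)]
    exact hsum1l' (fun x => Rmat η (lam - ξ m) (i, s m) (c, x) * Zc) (t m)
  rw [hL, hR]


/-! ### Strings of operators -/

def site (M : ℕ) [NeZero M] (r : ℕ) : Fin M :=
  ⟨r % M, Nat.mod_lt _ (Nat.pos_of_ne_zero (NeZero.ne M))⟩

lemma site_val [NeZero M] {r : ℕ} (h : r < M) : (site M r).val = r := Nat.mod_eq_of_lt h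

lemma site_eq [NeZero M] (m : Fin M) : site M m.val = m := Fin.ext (site_val m.isLt)

lemma site_ne [NeZero M] {r : ℕ} {m : Fin M} (hr : r < M) (hne : r ≠ m.val) :
    site M r ≠ m := by
  intro h
  exact hne (by rw [← h, site_val hr])

variable [NeZero M]

/-- `L`-operators indexed by natural number sites. -/
def LopN (η : ℂ) (ξ : Fin M → ℂ) (lam : ℂ) (r : ℕ) :
    Matrix (Fin 2 × Spins M) (Fin 2 × Spins M) ℂ :=
  Lop M η ξ (site M r) lam

/-- the two-site `R`-matrix `R_{k,r}(ξ_k - ξ_r)`. -/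
def RkN (η : ℂ) (ξ : Fin M → ℂ) (k : Fin M) (r : ℕ) : Matrix (Spins M) (Spins M) ℂ :=
  twoSite (Rmat η (ξ k - ξ (site M r))) k (site M r)

/-- `R_{k,M-1} ⋯ R_{k,r}`. -/
def Dstr (η : ℂ) (ξ : Fin M → ℂ) (k : Fin M) (r : ℕ) : Matrix (Spins M) (Spins M) ℂ :=
  seg (RkN η ξ k) r M

/-- `R_{k,i-1} ⋯ R_{k,0}`. -/
def Bup (η : ℂ) (ξ : Fin M → ℂ) (k : Fin M) (i : ℕ) : Matrix (Spins M) (Spins M) ℂ :=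
  seg (RkN η ξ k) 0 i

/-! ### Closure lemmas for products -/

lemma Triv0_seg (m : Fin M) (g : ℕ → Matrix (Fin 2 × Spins M) (Fin 2 × Spins M) ℂ)
    (a : ℕ) : ∀ b : ℕ, (∀ r, a ≤ r → r < b → Triv0 m (g r)) → Triv0 m (seg g a b) := by
  intro b
  induction b with
  | zero => intro _; rw [seg_of_le _ (Nat.zero_le a)]; exact Triv0_one m
  | succ b ih =>
      intro h
      by_cases hab : a ≤ b
      · rw [seg_succ _ hab]
        exact Triv0_mul (h b hab (Nat.lt_succ_self b))
          (ih (fun r h1 h2 => h r h1 (Nat.lt_succ_of_lt h2)))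
      · rw [seg_of_le _ (by omega)]; exact Triv0_one m

lemma Htriv_seg (m : Fin M) (g : ℕ → Matrix (Spins M) (Spins M) ℂ)
    (a : ℕ) : ∀ b : ℕ, (∀ r, a ≤ r → r < b → Htriv m (g r)) → Htriv m (seg g a b) := by
  intro b
  induction b with
  | zero => intro _; rw [seg_of_le _ (Nat.zero_le a)]; exact Htriv_one m
  | succ b ih =>
      intro h
      by_cases hab : a ≤ b
      · rw [seg_succ _ hab]
        exact Htriv_mul (h b hab (Nat.lt_succ_self b))
          (ih (fun r h1 h2 => h r h1 (Nat.lt_succ_of_lt h2)))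
      · rw [seg_of_le _ (by omega)]; exact Htriv_one m

lemma Htriv_ffrom (m : Fin M) (g : ℕ → Matrix (Spins M) (Spins M) ℂ)
    (a : ℕ) : ∀ b : ℕ, (∀ r, a ≤ r → r < b → Htriv m (g r)) → Htriv m (ffrom g a b) := by
  intro b
  induction b with
  | zero => intro _; rw [ffrom_of_le _ (Nat.zero_le a)]; exact Htriv_one m
  | succ b ih =>
      intro h
      by_cases hab : a ≤ b
      · rw [ffrom_succ _ hab]
        exact Htriv_mul (ih (fun r h1 h2 => h r h1 (Nat.lt_succ_of_lt h2)))
          (h b hab (Nat.lt_succ_self b))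
      · rw [ffrom_of_le _ (by omega)]; exact Htriv_one m

lemma comm_seg {α : Type*} [Monoid α] (x : α) (g : ℕ → α) (a : ℕ) :
    ∀ b : ℕ, (∀ r, a ≤ r → r < b → x * g r = g r * x) → x * seg g a b = seg g a b * x := by
  intro b
  induction b with
  | zero => intro _; rw [seg_of_le _ (Nat.zero_le a), one_mul, mul_one]
  | succ b ih =>
      intro h
      by_cases hab : a ≤ b
      · rw [seg_succ _ hab, ← mul_assoc, h b hab (Nat.lt_succ_self b), mul_assoc,
          ih (fun r h1 h2 => h r h1 (Nat.lt_succ_of_lt h2)), mul_assoc]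
      · rw [seg_of_le _ (by omega), one_mul, mul_one]

lemma comm_ffrom {α : Type*} [Monoid α] (x : α) (g : ℕ → α) (a : ℕ) :
    ∀ b : ℕ, (∀ r, a ≤ r → r < b → x * g r = g r * x) → x * ffrom g a b = ffrom g a b * x := by
  intro b
  induction b with
  | zero => intro _; rw [ffrom_of_le _ (Nat.zero_le a), one_mul, mul_one]
  | succ b ih =>
      intro h
      by_cases hab : a ≤ b
      · rw [ffrom_succ _ hab, ← mul_assoc,
          ih (fun r h1 h2 => h r h1 (Nat.lt_succ_of_lt h2)), mul_assoc,
          h b hab (Nat.lt_succ_self b), mul_assoc]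
      · rw [ffrom_of_le _ (by omega), one_mul, mul_one]

lemma Triv0_Lo (η : ℂ) (ξ : Fin M → ℂ) (lam : ℂ) (m : Fin M) (a b : ℕ) (hbM : b ≤ M)
    (hm : ∀ r, a ≤ r → r < b → r ≠ m.val) :
    Triv0 m (seg (LopN η ξ lam) a b) := by
  apply Triv0_seg
  intro r h1 h2
  exact Triv0_Lop (site_ne (lt_of_lt_of_le h2 hbM) (hm r h1 h2)) η ξ lam

lemma plug_seg (η : ℂ) (ξ : Fin M → ℂ) (lam : ℂ) (j : Fin M) (a : ℕ) :
    ∀ b : ℕ, b ≤ M → (∀ r, a ≤ r → r < b → r ≠ j.val) →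
    plug j (seg (LopN η ξ lam) a b)
      = seg (fun r => twoSite (Rmat η (lam - ξ (site M r))) j (site M r)) a b := by
  intro b
  induction b with
  | zero =>
      intro _ _
      rw [seg_of_le _ (Nat.zero_le a), seg_of_le _ (Nat.zero_le a)]
      exact plug_one j
  | succ b ih =>
      intro hbM hj
      by_cases hab : a ≤ b
      · rw [seg_succ _ hab, seg_succ _ hab]
        rw [plug_mul (X := LopN η ξ lam b) (Y := seg (LopN η ξ lam) a b)
          (Triv0_Lop (site_ne (by omega) (hj b hab (Nat.lt_succ_self b))) η ξ lam)
          (Triv0_Lo η ξ lam j a b (by omega) (fun r h1 h2 => hj r h1 (Nat.lt_succ_of_lt h2)))]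
        rw [ih (by omega) (fun r h1 h2 => hj r h1 (Nat.lt_succ_of_lt h2))]
        have hL : plug j (LopN η ξ lam b)
            = twoSite (Rmat η (lam - ξ (site M b))) j (site M b) :=
          plug_Lop (site_ne (by omega) (hj b hab (Nat.lt_succ_self b))) η ξ lam
        rw [hL]
      · rw [seg_of_le _ (by omega), seg_of_le _ (by omega)]
        exact plug_one j

lemma Tmono_seg (η : ℂ) (ξ : Fin M → ℂ) (lam : ℂ) :
    Tmono M η ξ lam = seg (LopN η ξ lam) 0 M := by
  unfold Tmono
  rw [show (fun m : Fin M => Lop M η ξ m lam)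
      = fun m : Fin M => (LopN η ξ lam) m.val from funext fun m => by
    unfold LopN; rw [site_eq]]
  exact ofFn_reverse_prod M (LopN η ξ lam)

lemma ptrace0_smul (c : ℂ) (X : Matrix (Fin 2 × Spins M) (Fin 2 × Spins M) ℂ) :
    ptrace0 (c • X) = c • ptrace0 X := by
  ext s t
  rw [Matrix.smul_apply]
  unfold ptrace0
  simp [Fin.sum_univ_two, mul_add]


/-! ### The factorization of the monodromy matrix at `λ = ξ_j` -/

lemma trace_factor (η : ℂ) (ξ : Fin M → ℂ) (P : Matrix (Fin 2) (Fin 2) ℂ) (j : Fin M) :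
    ptrace0 (kron0 P * Tmono M η ξ (ξ j)) =
      Complex.sinh η •
        (Bup η ξ j j.val * (pauliAt M P j * Dstr η ξ j (j.val + 1))) := by
  have hjM : j.val < M := j.isLt
  set L := LopN η ξ (ξ j) with hLdef
  set Up := seg L (j.val + 1) M with hUpdef
  set Lo := seg L 0 j.val with hLodef
  set Z := plug j Lo with hZdef
  have hLj : L j.val = Complex.sinh η • Sw j := by
    rw [hLdef]
    show Lop M η ξ (site M j.val) (ξ j) = _
    rw [site_eq]
    exact Lop_swap η ξ j
  have hsplit : Tmono M η ξ (ξ j) = Up * (L j.val * Lo) := by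
    calc Tmono M η ξ (ξ j) = seg L 0 M := Tmono_seg η ξ (ξ j)
      _ = seg L (j.val + 1) M * seg L 0 (j.val + 1) :=
          seg_split L (Nat.zero_le _) (by omega)
      _ = seg L (j.val + 1) M * (seg L j.val (j.val + 1) * seg L 0 j.val) := by
          rw [← seg_split L (Nat.zero_le _) (Nat.le_succ _)]
      _ = Up * (L j.val * Lo) := by
          rw [seg_succ L (le_refl _), seg_self, mul_one]
  have hTLo : Triv0 j Lo :=
    Triv0_Lo η ξ (ξ j) j 0 j.val (by omega) (fun r _ h2 => by omega)
  have hTUp : Triv0 j Up :=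
    Triv0_Lo η ξ (ξ j) j (j.val + 1) M (le_refl M) (fun r h1 _ => by omega)
  have hZtriv : ∀ r, j.val + 1 ≤ r → r < M → Htriv (site M r) Z := by
    intro r h1 h2
    refine Htriv_plug (site_ne h2 (by omega)) ?_
    refine Triv0_Lo η ξ (ξ j) (site M r) 0 j.val (by omega) ?_
    intro r' _ h2'
    rw [site_val h2]
    omega
  have hcore : kron0 P * (Up * (Sw j * Lo)) = auxLift Z * ((kron0 P * Up) * Sw j) := by
    rw [Sw_mul_triv hTLo, ← hZdef]
    have h1 : auxLift Z * Up = Up * auxLift Z := by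
      apply comm_seg
      intro r h1 h2
      exact auxLift_Lop_comm (hZtriv r h1 h2) η ξ (ξ j)
    have h2 : kron0 P * auxLift Z = auxLift Z * kron0 P := auxLift_kron0_comm Z P
    calc kron0 P * (Up * (auxLift Z * Sw j))
        = ((kron0 P * Up) * auxLift Z) * Sw j := by simp only [mul_assoc]
      _ = (auxLift Z * (kron0 P * Up)) * Sw j := by
          rw [show (kron0 P * Up) * auxLift Z = auxLift Z * (kron0 P * Up) from by
            rw [mul_assoc, ← h1, ← mul_assoc, h2, mul_assoc]]
      _ = auxLift Z * ((kron0 P * Up) * Sw j) := by rw [mul_assoc]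
  have hZB : Z = Bup η ξ j j.val := by
    rw [hZdef, hLodef, hLdef, plug_seg η ξ (ξ j) j 0 j.val (by omega) (fun r _ h2 => by omega)]
    rfl
  have hUD : plug j Up = Dstr η ξ j (j.val + 1) := by
    rw [hUpdef, hLdef,
      plug_seg η ξ (ξ j) j (j.val + 1) M (le_refl M) (fun r h1 _ => by omega)]
    rfl
  calc ptrace0 (kron0 P * Tmono M η ξ (ξ j))
      = ptrace0 (kron0 P * (Up * ((Complex.sinh η • Sw j) * Lo))) := by
        rw [hsplit, hLj]
      _ = ptrace0 (Complex.sinh η • (kron0 P * (Up * (Sw j * Lo)))) := by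
        rw [smul_mul_assoc, mul_smul_comm, mul_smul_comm]
      _ = Complex.sinh η • ptrace0 (auxLift Z * ((kron0 P * Up) * Sw j)) := by
        rw [ptrace0_smul, hcore]
      _ = Complex.sinh η • (Z * ptrace0 ((kron0 P * Up) * Sw j)) := by
        rw [ptrace0_pull]
      _ = Complex.sinh η • (Z * plug j (kron0 P * Up)) := by
        rw [ptrace0_sw (Triv0_mul (Triv0_kron0 j P) hTUp)]
      _ = Complex.sinh η • (Z * (pauliAt M P j * plug j Up)) := by
        rw [plug_mul (Triv0_kron0 j P) hTUp, plug_kron0]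
      _ = Complex.sinh η •
          (Bup η ξ j j.val * (pauliAt M P j * Dstr η ξ j (j.val + 1))) := by
        rw [hZB, hUD]

lemma transfer_ptrace (η : ℂ) (ξ : Fin M → ℂ) (mu : ℂ) :
    transfer M η ξ mu = ptrace0 (Tmono M η ξ mu) := by
  ext s t
  unfold transfer transferK
  rw [Matrix.add_apply, Matrix.smul_apply]
  unfold Aop Dop ptrace0
  simp [Fin.sum_univ_two]

lemma transfer_factor (η : ℂ) (ξ : Fin M → ℂ) (j : Fin M) :
    transfer M η ξ (ξ j) =
      Complex.sinh η • (Bup η ξ j j.val * Dstr η ξ j (j.val + 1)) := by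
  rw [transfer_ptrace, ← one_mul (Tmono M η ξ (ξ j)), ← kron0_one,
    trace_factor η ξ 1 j, pauliAt_one, one_mul]


/-! ### The product of transfer matrices as a product of `D`-strings -/

lemma mul_left_swap {α : Type*} [Semigroup α] {x y : α} (h : x * y = y * x) (z : α) :
    x * (y * z) = y * (x * z) := by
  rw [← mul_assoc, h, mul_assoc]

lemma Htriv_Dstr (η : ℂ) (ξ : Fin M → ℂ) {m k : Fin M} (hmk : m ≠ k) {r : ℕ}
    (hmr : m.val < r) : Htriv m (Dstr η ξ k r) := by
  unfold Dstr
  apply Htriv_seg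
  intro r' h1 h2
  exact Htriv_twoSite hmk (Ne.symm (site_ne h2 (by omega))) _

lemma RkN_cancel (η : ℂ) (ξ : Fin M → ℂ) {a b : Fin M} (hab : a ≠ b) :
    twoSite (Rmat η (ξ a - ξ b)) a b * twoSite (Rmat η (ξ b - ξ a)) b a
      = (Complex.sinh (η + (ξ a - ξ b)) * Complex.sinh (η - (ξ a - ξ b))) •
          (1 : Matrix (Spins M) (Spins M) ℂ) := by
  rw [twoSite_swap (Rmat η (ξ b - ξ a)) b a]
  rw [show (fun p q => Rmat η (ξ b - ξ a) (p.2, p.1) (q.2, q.1)) = Rmat η (ξ b - ξ a) from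
    funext fun p => funext fun q => Rmat_swap η _ p q]
  rw [twoSite_mul hab]
  rw [show ξ b - ξ a = -(ξ a - ξ b) from by ring]
  rw [Rmat_unit, twoSite_smul_one hab]

/-- the hybrid product appearing in the cancellation argument. -/
def mix (η : ℂ) (ξ : Fin M → ℂ) (n i : ℕ) : Matrix (Spins M) (Spins M) ℂ :=
  ffrom (fun k => Dstr η ξ (site M k) n) 0 i *
    (ffrom (fun k => Dstr η ξ (site M k) (n + 1)) i n *
      Bup η ξ (site M n) i)

lemma site_ne_site {x y : ℕ} (hx : x < M) (hy : y < M) (hxy : x ≠ y) :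
    site M x ≠ site M y := by
  intro h
  have := congrArg Fin.val h
  rw [site_val hx, site_val hy] at this
  exact hxy this

lemma mix_step (η : ℂ) (ξ : Fin M → ℂ) {n i : ℕ} (hn : n < M) (hi : i < n) :
    ∃ c : ℂ, mix η ξ n (i + 1) = c • mix η ξ n i := by
  have hiM : i < M := by omega
  have hsin : site M i ≠ site M n := site_ne_site hiM hn (by omega)
  refine ⟨Complex.sinh (η + (ξ (site M i) - ξ (site M n))) *
      Complex.sinh (η - (ξ (site M i) - ξ (site M n))), ?_⟩
  have comm : RkN η ξ (site M i) n * ffrom (fun k => Dstr η ξ (site M k) (n + 1)) (i + 1) n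
      = ffrom (fun k => Dstr η ξ (site M k) (n + 1)) (i + 1) n * RkN η ξ (site M i) n := by
    unfold RkN
    apply twoSite_comm hsin
    · apply Htriv_ffrom
      intro k h1 h2
      exact Htriv_Dstr η ξ (site_ne_site hiM (by omega) (by omega))
        (by rw [site_val hiM]; omega)
    · apply Htriv_ffrom
      intro k h1 h2
      exact Htriv_Dstr η ξ (site_ne_site hn (by omega) (by omega))
        (by rw [site_val hn]; omega)
  have cancel : RkN η ξ (site M i) n * RkN η ξ (site M n) i
      = (Complex.sinh (η + (ξ (site M i) - ξ (site M n))) *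
          Complex.sinh (η - (ξ (site M i) - ξ (site M n)))) •
            (1 : Matrix (Spins M) (Spins M) ℂ) := by
    unfold RkN
    exact RkN_cancel η ξ hsin
  have e1 : mix η ξ n (i + 1)
      = ffrom (fun k => Dstr η ξ (site M k) n) 0 i *
          (Dstr η ξ (site M i) (n + 1) *
            (RkN η ξ (site M i) n *
              (ffrom (fun k => Dstr η ξ (site M k) (n + 1)) (i + 1) n *
                (RkN η ξ (site M n) i * Bup η ξ (site M n) i)))) := by
    unfold mix Bup
    rw [ffrom_succ _ (Nat.zero_le i), seg_succ _ (Nat.zero_le i)]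
    rw [show Dstr η ξ (site M i) n
        = Dstr η ξ (site M i) (n + 1) * RkN η ξ (site M i) n from by
      unfold Dstr
      rw [seg_split (RkN η ξ (site M i)) (Nat.le_succ n) (by omega : n + 1 ≤ M),
        seg_succ _ (le_refl n), seg_self, mul_one]]
    simp only [mul_assoc]
  have e0 : mix η ξ n i
      = ffrom (fun k => Dstr η ξ (site M k) n) 0 i *
          (Dstr η ξ (site M i) (n + 1) *
            (ffrom (fun k => Dstr η ξ (site M k) (n + 1)) (i + 1) n *
              Bup η ξ (site M n) i)) := by
    unfold mix
    rw [ffrom_cons _ hi]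
    simp only [mul_assoc]
  rw [e1, e0]
  rw [mul_left_swap comm]
  rw [show RkN η ξ (site M i) n * (RkN η ξ (site M n) i * Bup η ξ (site M n) i)
      = (Complex.sinh (η + (ξ (site M i) - ξ (site M n))) *
          Complex.sinh (η - (ξ (site M i) - ξ (site M n)))) • Bup η ξ (site M n) i from by
    rw [← mul_assoc, cancel, smul_mul_assoc, one_mul]]
  rw [mul_smul_comm, mul_smul_comm, mul_smul_comm]

lemma mix_all (η : ℂ) (ξ : Fin M → ℂ) {n : ℕ} (hn : n < M) :
    ∀ d : ℕ, d ≤ n → ∃ c : ℂ, mix η ξ n n = c • mix η ξ n (n - d) := by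
  intro d
  induction d with
  | zero => intro _; exact ⟨1, by rw [Nat.sub_zero, one_smul]⟩
  | succ d ih =>
      intro hd
      obtain ⟨c, hc⟩ := ih (by omega)
      obtain ⟨c', hc'⟩ := mix_step η ξ hn (show n - (d + 1) < n by omega)
      refine ⟨c * c', ?_⟩
      have he : n - (d + 1) + 1 = n - d := by omega
      rw [he] at hc'
      rw [hc, hc', smul_smul]

lemma DD_Bup (η : ℂ) (ξ : Fin M → ℂ) {n : ℕ} (hn : n < M) :
    ∃ c : ℂ, ffrom (fun k => Dstr η ξ (site M k) n) 0 n * Bup η ξ (site M n) n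
      = c • ffrom (fun k => Dstr η ξ (site M k) (n + 1)) 0 n := by
  obtain ⟨c, hc⟩ := mix_all η ξ hn n (le_refl n)
  refine ⟨c, ?_⟩
  have h0 : mix η ξ n n
      = ffrom (fun k => Dstr η ξ (site M k) n) 0 n * Bup η ξ (site M n) n := by
    unfold mix
    rw [ffrom_self, one_mul]
  have h1 : mix η ξ n (n - n)
      = ffrom (fun k => Dstr η ξ (site M k) (n + 1)) 0 n := by
    unfold mix Bup
    rw [Nat.sub_self, ffrom_of_le _ (le_refl 0), seg_of_le _ (le_refl 0), one_mul, mul_one]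
  rw [← h0, hc, h1]

lemma TP_DD (η : ℂ) (ξ : Fin M → ℂ) :
    ∀ n : ℕ, n ≤ M → ∃ c : ℂ,
      ffrom (fun k => transfer M η ξ (ξ (site M k))) 0 n
        = c • ffrom (fun k => Dstr η ξ (site M k) n) 0 n := by
  intro n
  induction n with
  | zero => intro _; exact ⟨1, by rw [ffrom_self, ffrom_self, one_smul]⟩
  | succ n ih =>
      intro h
      obtain ⟨c, hc⟩ := ih (by omega)
      obtain ⟨c', hc'⟩ := DD_Bup η ξ (show n < M by omega)
      refine ⟨c * Complex.sinh η * c', ?_⟩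
      rw [ffrom_succ _ (Nat.zero_le n), ffrom_succ _ (Nat.zero_le n), hc]
      rw [transfer_factor η ξ (site M n)]
      rw [site_val (show n < M by omega)]
      rw [smul_mul_assoc, mul_smul_comm, smul_smul]
      rw [show ffrom (fun k => Dstr η ξ (site M k) n) 0 n *
            (Bup η ξ (site M n) n * Dstr η ξ (site M n) (n + 1))
          = c' • (ffrom (fun k => Dstr η ξ (site M k) (n + 1)) 0 n *
              Dstr η ξ (site M n) (n + 1)) from by
        rw [← mul_assoc, hc', smul_mul_assoc]]
      rw [smul_smul, mul_assoc]


end QISP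

open QISP in
/-- Solution of the quantum inverse scattering problem:
`∏_{k=1}^{j-1} 𝒯(ξ_k) · tr_0[(σ^α ⊗ Id) T(ξ_j)] = σ^α_j · ∏_{k=1}^{j} 𝒯(ξ_k)`. -/
theorem quantum_inverse_scattering (M : ℕ) (hM : 1 ≤ M) (η : ℂ) (ξ : Fin M → ℂ)
    (j : Fin M) (P : Matrix (Fin 2) (Fin 2) ℂ)
    (hP : P = sigmaX ∨ P = sigmaY ∨ P = sigmaZ) :
    (List.ofFn (fun k : Fin j.val =>
        transfer M η ξ (ξ ⟨k.val, k.isLt.trans j.isLt⟩))).prod *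
      ptrace0 (kron0 P * Tmono M η ξ (ξ j)) =
    pauliAt M P j *
      (List.ofFn (fun k : Fin (j.val + 1) =>
        transfer M η ξ (ξ ⟨k.val, Nat.lt_of_lt_of_le k.isLt j.isLt⟩))).prod := by
  haveI : NeZero M := ⟨by omega⟩
  have hjM : j.val < M := j.isLt
  have hsj : site M j.val = j := site_eq j
  have hofn1 : (List.ofFn (fun k : Fin j.val =>
        transfer M η ξ (ξ ⟨k.val, k.isLt.trans j.isLt⟩))).prod
      = ffrom (fun r => transfer M η ξ (ξ (site M r))) 0 j.val := by
    rw [show (fun k : Fin j.val => transfer M η ξ (ξ ⟨k.val, k.isLt.trans j.isLt⟩))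
        = fun k : Fin j.val => (fun r => transfer M η ξ (ξ (site M r))) k.val from
      funext fun k => by
        show _ = transfer M η ξ (ξ (site M k.val))
        rw [show site M k.val = (⟨k.val, k.isLt.trans j.isLt⟩ : Fin M) from
          Fin.ext (site_val (k.isLt.trans j.isLt))]]
    exact ofFn_prod j.val (fun r => transfer M η ξ (ξ (site M r)))
  have hofn2 : (List.ofFn (fun k : Fin (j.val + 1) =>
        transfer M η ξ (ξ ⟨k.val, Nat.lt_of_lt_of_le k.isLt j.isLt⟩))).prod
      = ffrom (fun r => transfer M η ξ (ξ (site M r))) 0 (j.val + 1) := by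
    rw [show (fun k : Fin (j.val + 1) =>
          transfer M η ξ (ξ ⟨k.val, Nat.lt_of_lt_of_le k.isLt j.isLt⟩))
        = fun k : Fin (j.val + 1) => (fun r => transfer M η ξ (ξ (site M r))) k.val from
      funext fun k => by
        show _ = transfer M η ξ (ξ (site M k.val))
        rw [show site M k.val = (⟨k.val, Nat.lt_of_lt_of_le k.isLt j.isLt⟩ : Fin M) from
          Fin.ext (site_val (Nat.lt_of_lt_of_le k.isLt j.isLt))]]
    exact ofFn_prod (j.val + 1) (fun r => transfer M η ξ (ξ (site M r)))
  obtain ⟨c, hc⟩ := TP_DD η ξ j.val (le_of_lt hjM)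
  obtain ⟨c', hc'⟩ := DD_Bup η ξ hjM
  rw [hsj] at hc'
  have hDD' : Htriv j (ffrom (fun k => Dstr η ξ (site M k) (j.val + 1)) 0 j.val) := by
    apply Htriv_ffrom
    intro k h1 h2
    exact Htriv_Dstr η ξ (Ne.symm (site_ne (by omega) (by omega))) (by omega)
  have hcomm : ffrom (fun k => Dstr η ξ (site M k) (j.val + 1)) 0 j.val * pauliAt M P j
      = pauliAt M P j * ffrom (fun k => Dstr η ξ (site M k) (j.val + 1)) 0 j.val :=
    (pauliAt_comm P j hDD').symm
  rw [hofn1, hofn2, trace_factor η ξ P j]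
  rw [ffrom_succ _ (Nat.zero_le j.val)]
  rw [hsj]
  rw [transfer_factor η ξ j, hc]
  simp only [smul_mul_assoc, mul_smul_comm, smul_smul]
  congr 1
  have hL : ffrom (fun k => Dstr η ξ (site M k) j.val) 0 j.val *
        (Bup η ξ j j.val * (pauliAt M P j * Dstr η ξ j (j.val + 1)))
      = c' • (pauliAt M P j *
          (ffrom (fun k => Dstr η ξ (site M k) (j.val + 1)) 0 j.val *
            Dstr η ξ j (j.val + 1))) := by
    rw [← mul_assoc, hc', smul_mul_assoc, mul_left_swap hcomm]
  have hR : pauliAt M P j *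
        (ffrom (fun k => Dstr η ξ (site M k) j.val) 0 j.val *
          (Bup η ξ j j.val * Dstr η ξ j (j.val + 1)))
      = c' • (pauliAt M P j *
          (ffrom (fun k => Dstr η ξ (site M k) (j.val + 1)) 0 j.val *
            Dstr η ξ j (j.val + 1))) := by
    rw [← mul_assoc (ffrom (fun k => Dstr η ξ (site M k) j.val) 0 j.val), hc',
      smul_mul_assoc, mul_smul_comm]
  rw [hL, hR]

end
end

section
/- (Hyperbolic Cauchy determinant.) Let N ≥ 1 and λ1,…,λN, μ1,…,μN ∈ ℂ with sinh(μk−λj) ≠ 0 for all j,k. Then det_N(1/sinh(μk−λj)) = ∏_{N ≥ a > b ≥ 1} [sinh(λa−λb) sinh(μb−μa)] / ∏_{a,b=1}^{N} sinh(μb−λa). -/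
open Complex Matrix BigOperators

noncomputable section

private lemma sinh_exp_key (z w : ℂ) :
    Complex.exp (2*w) - Complex.exp (2*z) = 2 * Complex.exp (z+w) * Complex.sinh (w-z) := by
  have e1 : Complex.exp (2*w) = Complex.exp (z+w) * Complex.exp (w-z) := by
    rw [← Complex.exp_add]; congr 1; ring
  have e2 : Complex.exp (2*z) = Complex.exp (z+w) * Complex.exp (-(w-z)) := by
    rw [← Complex.exp_add]; congr 1; ring
  rw [Complex.sinh, e1, e2]; ring

private lemma cauchyAux_G (N : ℕ) (q : Fin N → ℂ) :
    (∏ a : Fin N, ∏ b : Fin N, if b.val < a.val then q a * q b else 1) =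
      (∏ c : Fin N, q c) ^ (N - 1) := by
  have hsplit : ∀ a : Fin N, (∏ b : Fin N, if b.val < a.val then q a * q b else 1) =
      (∏ b : Fin N, if b.val < a.val then q a else 1) *
        (∏ b : Fin N, if b.val < a.val then q b else 1) := by
    intro a
    rw [← Finset.prod_mul_distrib]
    refine Finset.prod_congr rfl fun b _ => ?_
    by_cases hab : b.val < a.val <;> simp [hab]
  have hT1 : ∀ a : Fin N, (∏ b : Fin N, if b.val < a.val then q a else 1) = q a ^ a.val := by
    intro a
    rw [Finset.prod_ite, Finset.prod_const, Finset.prod_const_one, mul_one]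
    congr 1
    have : (Finset.univ.filter fun b : Fin N => b.val < a.val) = Finset.Iio a := by
      ext b; simp only [Finset.mem_filter, Finset.mem_univ, true_and, Finset.mem_Iio, Fin.lt_def]
    rw [this, Fin.card_Iio]
  have hT2 : ∀ b : Fin N, (∏ a : Fin N, if b.val < a.val then q b else 1) =
      q b ^ (N - 1 - b.val) := by
    intro b
    rw [Finset.prod_ite, Finset.prod_const, Finset.prod_const_one, mul_one]
    congr 1
    have : (Finset.univ.filter fun a : Fin N => b.val < a.val) = Finset.Ioi b := by
      ext a; simp only [Finset.mem_filter, Finset.mem_univ, true_and, Finset.mem_Ioi, Fin.lt_def]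
    rw [this, Fin.card_Ioi]
  rw [Finset.prod_congr rfl fun a _ => hsplit a, Finset.prod_mul_distrib]
  rw [Finset.prod_congr rfl fun a _ => hT1 a]
  rw [Finset.prod_comm (f := fun a b : Fin N => if b.val < a.val then q b else 1)]
  rw [Finset.prod_congr rfl fun b _ => hT2 b]
  rw [← Finset.prod_mul_distrib, ← Finset.prod_pow]
  refine Finset.prod_congr rfl fun c _ => ?_
  rw [← pow_add]
  congr 1
  have : c.val ≤ N - 1 := Nat.le_pred_of_lt c.isLt
  omega

private lemma cauchyAux_H (N : ℕ) (lam mu : Fin N → ℂ) :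
    (∏ a : Fin N, ∏ b : Fin N, (1/(2*Complex.exp (lam a + mu b)))) =
      (∏ c : Fin N, (1/(2*Complex.exp (lam c + mu c)))) ^ N := by
  have key : ∀ z w : ℂ, (1/(2*Complex.exp (z + w))) =
      (Complex.exp z)⁻¹ * (1/(2*Complex.exp w)) := by
    intro z w
    rw [Complex.exp_add, one_div, one_div, mul_inv, mul_inv]
    ring
  have h1 : ∀ a : Fin N, (∏ b : Fin N, (1/(2*Complex.exp (lam a + mu b)))) =
      (Complex.exp (lam a))⁻¹ ^ N * (∏ b : Fin N, (1/(2*Complex.exp (mu b)))) := by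
    intro a
    rw [Finset.prod_congr rfl fun b _ => key (lam a) (mu b), Finset.prod_mul_distrib,
      Finset.prod_const, Finset.card_univ, Fintype.card_fin]
  rw [Finset.prod_congr rfl fun a _ => h1 a, Finset.prod_mul_distrib, Finset.prod_pow,
    Finset.prod_const, Finset.card_univ, Fintype.card_fin, ← mul_pow]
  congr 1
  rw [← Finset.prod_mul_distrib]
  exact (Finset.prod_congr rfl fun c _ => key (lam c) (mu c)).symm

private lemma cauchyAux_KQ (N : ℕ) (lam mu : Fin N → ℂ) :
    ((∏ k, 2 * Complex.exp (mu k)) * (∏ j, Complex.exp (lam j))) *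
      (∏ c : Fin N, (1/(2*Complex.exp (lam c + mu c)))) = 1 := by
  rw [← Finset.prod_mul_distrib, ← Finset.prod_mul_distrib]
  rw [Finset.prod_congr rfl fun c _ => ?_, Finset.prod_const_one]
  have h1 := Complex.exp_ne_zero (lam c)
  have h2 := Complex.exp_ne_zero (mu c)
  rw [Complex.exp_add]
  field_simp

private lemma cauchy_rat : ∀ (n : ℕ) (x y : Fin n → ℂ), (∀ j k : Fin n, y k - x j ≠ 0) →
    (Matrix.of fun j k : Fin n => 1 / (y k - x j)).det =
      (∏ a : Fin n, ∏ b : Fin n, if b.val < a.val then (x a - x b) * (y b - y a) else 1) /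
        (∏ a : Fin n, ∏ b : Fin n, (y b - x a)) := by
  intro n
  induction n with
  | zero =>
    intro x y _
    simp [Matrix.det_fin_zero]
  | succ n ih =>
    intro x y h
    set L : Fin (n + 1) := Fin.last n with hLdef
    -- Step 1: row operations
    set C : Matrix (Fin (n+1)) (Fin (n+1)) ℂ :=
      Matrix.of fun j k => if j = L then 1 else 1 / (y k - x j) with hC
    set B : Matrix (Fin (n+1)) (Fin (n+1)) ℂ :=
      Matrix.of fun j k => (1 / (y k - x L)) *
        (Matrix.of (fun j k => (if j = L then 1 else x j - x L) * C j k) j k) with hB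
    have hMB : (Matrix.of fun j k : Fin (n+1) => 1 / (y k - x j)).det = B.det := by
      apply Matrix.det_eq_of_forall_row_eq_smul_add_const
        (fun j => if j = L then 0 else 1) L (by simp)
      intro i j
      by_cases hi : i = L
      · subst hi; simp [hB, hC]
      · simp only [hB, hC, Matrix.of_apply, if_neg hi, if_pos rfl, eq_self_iff_true, ite_true]
        have h1 := h i j
        have h2 := h L j
        field_simp
        ring
    have hBval : B.det = (∏ k, 1 / (y k - x L)) *
        ((∏ j, if j = L then 1 else x j - x L) * C.det) := by
      rw [hB, Matrix.det_mul_row, Matrix.det_mul_column]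
    -- Step 2: column operations
    set D : Matrix (Fin (n+1)) (Fin (n+1)) ℂ :=
      Matrix.of fun j k =>
        if k = L then C j L
        else (if j = L then 0 else (y L - y k) * (1 / ((y k - x j) * (y L - x j)))) with hD
    have hCD : C.det = D.det := by
      rw [← Matrix.det_transpose C, ← Matrix.det_transpose D]
      apply Matrix.det_eq_of_forall_row_eq_smul_add_const
        (fun k => if k = L then 0 else 1) L (by simp)
      intro k j
      simp only [Matrix.transpose_apply]
      by_cases hk : k = L
      · subst hk; simp [hD]
      · by_cases hj : j = L
        · subst hj; simp [hD, hC, hk]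
        · simp only [hD, hC, Matrix.of_apply, if_neg hk, if_neg hj, if_pos rfl, eq_self_iff_true, ite_true]
          have h1 := h j k
          have h2 := h j L
          field_simp
          ring
    -- Step 3: expand along last row
    have hDlast : ∀ k, D L k = if k = L then 1 else 0 := by
      intro k
      by_cases hk : k = L <;> simp [hD, hC, hk]
    have hDexp : D.det = (D.submatrix Fin.castSucc Fin.castSucc).det := by
      rw [Matrix.det_succ_row D L]
      rw [Finset.sum_eq_single L]
      · rw [hDlast L, if_pos rfl]
        have he : ((-1:ℂ)) ^ ((L:ℕ) + (L:ℕ)) = 1 := Even.neg_one_pow ⟨(L:ℕ), rfl⟩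
        rw [he]
        simp [hLdef, Fin.succAbove_last]
      · intro b _ hb
        rw [hDlast b, if_neg hb]
        ring
      · intro hL; exact absurd (Finset.mem_univ L) hL
    -- Step 4: factor submatrix
    set M' : Matrix (Fin n) (Fin n) ℂ :=
      Matrix.of fun j k => 1 / (y (Fin.castSucc k) - x (Fin.castSucc j)) with hM'
    have hsub : D.submatrix Fin.castSucc Fin.castSucc =
        Matrix.of fun j k => (y L - y (Fin.castSucc k)) *
          (Matrix.of (fun j k : Fin n => (1 / (y L - x (Fin.castSucc j))) * M' j k) j k) := by
      ext j k
      have hjL : Fin.castSucc j ≠ L := Fin.ne_last_of_lt (Fin.castSucc_lt_last j)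
      have hkL : Fin.castSucc k ≠ L := Fin.ne_last_of_lt (Fin.castSucc_lt_last k)
      simp only [Matrix.submatrix_apply, hD, hM', Matrix.of_apply, if_neg hjL, if_neg hkL]
      rw [one_div, mul_inv]
      ring
    have hsubval : (D.submatrix Fin.castSucc Fin.castSucc).det =
        (∏ k : Fin n, (y L - y (Fin.castSucc k))) *
          ((∏ j : Fin n, 1 / (y L - x (Fin.castSucc j))) * M'.det) := by
      rw [hsub, Matrix.det_mul_row, Matrix.det_mul_column]
    have hIH := ih (fun j => x (Fin.castSucc j)) (fun k => y (Fin.castSucc k))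
      (fun j k => h _ _)
    set NumIH := ∏ a : Fin n, ∏ b : Fin n,
      if b.val < a.val then (x a.castSucc - x b.castSucc) * (y b.castSucc - y a.castSucc) else 1
      with hNumIH
    set DenIH := ∏ a : Fin n, ∏ b : Fin n, (y b.castSucc - x a.castSucc) with hDenIH
    have hIH' : M'.det = NumIH / DenIH := hIH
    have hP1 : (∏ k : Fin (n+1), (y k - x L)) ≠ 0 :=
      Finset.prod_ne_zero_iff.mpr fun k _ => h L k
    have hP4 : (∏ j : Fin n, (y L - x j.castSucc)) ≠ 0 :=
      Finset.prod_ne_zero_iff.mpr fun j _ => h _ L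
    have hDen0 : DenIH ≠ 0 := Finset.prod_ne_zero_iff.mpr fun a _ =>
      Finset.prod_ne_zero_iff.mpr fun b _ => h _ _
    have hA1 : (∏ k : Fin (n+1), 1 / (y k - x L)) = (∏ k : Fin (n+1), (y k - x L))⁻¹ := by
      simp [one_div]
    have hA2 : (∏ j : Fin n, 1 / (y L - x j.castSucc)) =
        (∏ j : Fin n, (y L - x j.castSucc))⁻¹ := by
      simp [one_div]
    have hW : (∏ j : Fin (n+1), if j = L then 1 else x j - x L) =
        ∏ j : Fin n, (x j.castSucc - x L) := by
      rw [Fin.prod_univ_castSucc]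
      rw [if_pos rfl, mul_one]
      exact Finset.prod_congr rfl fun j _ => by
        rw [if_neg (Fin.ne_last_of_lt (Fin.castSucc_lt_last j))]
    have hDen : (∏ a : Fin (n+1), ∏ b : Fin (n+1), (y b - x a)) =
        DenIH * ((∏ k : Fin (n+1), (y k - x L)) * (∏ j : Fin n, (y L - x j.castSucc))) := by
      rw [Fin.prod_univ_castSucc]
      have : ∀ a : Fin n, (∏ b : Fin (n+1), (y b - x a.castSucc)) =
          (∏ b : Fin n, (y b.castSucc - x a.castSucc)) * (y L - x a.castSucc) := by
        intro a; rw [Fin.prod_univ_castSucc]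
      rw [Finset.prod_congr rfl fun a _ => this a, Finset.prod_mul_distrib, hDenIH]
      ring
    have hNum : (∏ a : Fin (n+1), ∏ b : Fin (n+1),
          if b.val < a.val then (x a - x b) * (y b - y a) else 1) =
        NumIH * ∏ b : Fin n, ((x L - x b.castSucc) * (y b.castSucc - y L)) := by
      rw [Fin.prod_univ_castSucc]
      have h1 : ∀ a : Fin n, (∏ b : Fin (n+1),
          if b.val < (a.castSucc).val then (x a.castSucc - x b) * (y b - y a.castSucc) else 1) =
          ∏ b : Fin n, (if b.val < a.val then
            (x a.castSucc - x b.castSucc) * (y b.castSucc - y a.castSucc) else 1) := by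
        intro a
        rw [Fin.prod_univ_castSucc]
        simp [Fin.val_last, Fin.coe_castSucc, Nat.not_lt.mpr (Nat.le_of_lt a.isLt)]
      have h2 : (∏ b : Fin (n+1), if b.val < (L:Fin (n+1)).val then (x L - x b) * (y b - y L) else 1) =
          ∏ b : Fin n, ((x L - x b.castSucc) * (y b.castSucc - y L)) := by
        rw [Fin.prod_univ_castSucc]
        simp only [hLdef, Fin.val_last, lt_irrefl, if_false, mul_one, Fin.coe_castSucc]
        exact Finset.prod_congr rfl fun b _ => if_pos b.isLt
      rw [Finset.prod_congr rfl fun a _ => h1 a, h2, hNumIH]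
    have hP5 : (∏ j : Fin n, (x j.castSucc - x L)) * (∏ k : Fin n, (y L - y k.castSucc)) =
        ∏ b : Fin n, ((x L - x b.castSucc) * (y b.castSucc - y L)) := by
      rw [← Finset.prod_mul_distrib]
      exact Finset.prod_congr rfl fun b _ => by ring
    rw [hMB, hBval, hCD, hDexp, hsubval, hIH', hA1, hA2, hW, hDen, hNum, ← hP5]
    field_simp


/-- The hyperbolic Cauchy determinant. -/
theorem cauchy_determinant (N : ℕ) (hN : 1 ≤ N) (lam mu : Fin N → ℂ)
    (h : ∀ j k : Fin N, Complex.sinh (mu k - lam j) ≠ 0) :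
    (Matrix.of fun j k : Fin N => 1 / Complex.sinh (mu k - lam j)).det =
      (∏ a : Fin N, ∏ b : Fin N, if b.val < a.val then
          Complex.sinh (lam a - lam b) * Complex.sinh (mu b - mu a) else 1) /
        (∏ a : Fin N, ∏ b : Fin N, Complex.sinh (mu b - lam a)) := by
  set x : Fin N → ℂ := fun j => Complex.exp (2 * lam j) with hx
  set y : Fin N → ℂ := fun k => Complex.exp (2 * mu k) with hy
  have h' : ∀ j k : Fin N, y k - x j ≠ 0 := fun j k => by
    rw [hx, hy]; simp only []
    rw [sinh_exp_key (lam j) (mu k)]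
    exact mul_ne_zero (mul_ne_zero two_ne_zero (Complex.exp_ne_zero _)) (h j k)
  have hdet : (Matrix.of fun j k : Fin N => 1 / Complex.sinh (mu k - lam j)).det =
      (∏ k, 2 * Complex.exp (mu k)) * ((∏ j, Complex.exp (lam j)) *
        (Matrix.of fun j k : Fin N => 1 / (y k - x j)).det) := by
    have hm : (Matrix.of fun j k : Fin N => 1 / Complex.sinh (mu k - lam j)) =
        Matrix.of fun j k : Fin N => (2 * Complex.exp (mu k)) *
          (Matrix.of (fun j k : Fin N => Complex.exp (lam j) *
            (Matrix.of (fun j k : Fin N => 1 / (y k - x j)) j k)) j k) := by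
      ext j k
      simp only [Matrix.of_apply]
      rw [hy, hx]; simp only []
      rw [sinh_exp_key (lam j) (mu k), Complex.exp_add]
      have hs := h j k
      have he1 := Complex.exp_ne_zero (lam j)
      have he2 := Complex.exp_ne_zero (mu k)
      field_simp
    rw [hm, Matrix.det_mul_row, Matrix.det_mul_column]
  have hNum : (∏ a : Fin N, ∏ b : Fin N, if b.val < a.val then
        Complex.sinh (lam a - lam b) * Complex.sinh (mu b - mu a) else 1) =
      (∏ a : Fin N, ∏ b : Fin N, if b.val < a.val then (x a - x b) * (y b - y a) else 1) *
      (∏ a : Fin N, ∏ b : Fin N, if b.val < a.val then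
          (1/(2*Complex.exp (lam a + mu a))) * (1/(2*Complex.exp (lam b + mu b))) else 1) := by
    rw [← Finset.prod_mul_distrib]
    refine Finset.prod_congr rfl fun a _ => ?_
    rw [← Finset.prod_mul_distrib]
    refine Finset.prod_congr rfl fun b _ => ?_
    by_cases hab : b.val < a.val
    · simp only [if_pos hab]
      rw [hx, hy]; simp only []
      rw [sinh_exp_key (lam b) (lam a), sinh_exp_key (mu a) (mu b)]
      simp only [Complex.exp_add]
      have h1 := Complex.exp_ne_zero (lam a)
      have h2 := Complex.exp_ne_zero (lam b)
      have h3 := Complex.exp_ne_zero (mu a)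
      have h4 := Complex.exp_ne_zero (mu b)
      field_simp
    · simp [hab]
  have hDen : (∏ a : Fin N, ∏ b : Fin N, Complex.sinh (mu b - lam a)) =
      (∏ a : Fin N, ∏ b : Fin N, (y b - x a)) *
      (∏ a : Fin N, ∏ b : Fin N, (1/(2*Complex.exp (lam a + mu b)))) := by
    rw [← Finset.prod_mul_distrib]
    refine Finset.prod_congr rfl fun a _ => ?_
    rw [← Finset.prod_mul_distrib]
    refine Finset.prod_congr rfl fun b _ => ?_
    rw [hx, hy]; simp only []
    rw [sinh_exp_key (lam a) (mu b)]
    have h1 := Complex.exp_ne_zero (lam a + mu b)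
    field_simp
  have hG : (∏ a : Fin N, ∏ b : Fin N, if b.val < a.val then
        (1/(2*Complex.exp (lam a + mu a))) * (1/(2*Complex.exp (lam b + mu b))) else 1) =
      (∏ c : Fin N, (1/(2*Complex.exp (lam c + mu c)))) ^ (N - 1) :=
    cauchyAux_G N (fun c => 1/(2*Complex.exp (lam c + mu c)))
  have hH := cauchyAux_H N lam mu
  have hKQ := cauchyAux_KQ N lam mu
  set Q : ℂ := ∏ c : Fin N, (1/(2*Complex.exp (lam c + mu c))) with hQ
  have hQ0 : Q ≠ 0 := by
    intro h0
    rw [h0, mul_zero] at hKQ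
    exact zero_ne_one hKQ
  have hD0 : (∏ a : Fin N, ∏ b : Fin N, (y b - x a)) ≠ 0 :=
    Finset.prod_ne_zero_iff.mpr fun a _ => Finset.prod_ne_zero_iff.mpr fun b _ => h' a b
  rw [hdet, cauchy_rat N x y h', hNum, hDen, hG, hH]
  have hQN : Q ^ N = Q ^ (N - 1) * Q := by
    conv_lhs => rw [show N = (N - 1) + 1 from (Nat.succ_pred_eq_of_pos hN).symm]
    rw [pow_succ]
  rw [hQN]
  field_simp
  linear_combination ((∏ a : Fin N, ∏ b : Fin N, if b.val < a.val then
      (x a - x b) * (y b - y a) else 1)) * hKQ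


end
end

section
/- Let M ≥ 2 and 1 ≤ m ≤ M−1. The map κ ↦ Q^κ_{1,m+1} − Q^κ_{1,m} − Q^κ_{2,m+1} + Q^κ_{2,m} is a polynomial in κ with operator coefficients, and its second derivative with respect to κ evaluated at κ = 1 equals (1/2)(1−σ^z_1)(1−σ^z_{m+1}) as an operator on H = (ℂ²)^{⊗M}. -/
open Complex Matrix BigOperators

noncomputable section

open Polynomial in
lemma iteratedDeriv_two_sq_mul (p : ℂ[X]) (a : ℂ) :
    iteratedDeriv 2 (fun x => ((X - C a)^2 * p).eval x) a = 2 * p.eval a := by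
  rw [show (2:ℕ) = 1 + 1 from rfl, iteratedDeriv_succ, iteratedDeriv_one]
  have h1 : deriv (fun x : ℂ => ((X - C a)^2 * p).eval x) =
      fun x => (derivative ((X - C a)^2 * p)).eval x := by
    funext x; exact Polynomial.deriv _
  rw [h1]
  rw [Polynomial.deriv _]
  simp [Polynomial.derivative_mul, Polynomial.derivative_pow]

lemma diag_list_prod {n α : Type*} [Fintype n] [DecidableEq n] [CommSemiring α]
    (L : List (n → α)) :
    (L.map Matrix.diagonal).prod = Matrix.diagonal (fun i => (L.map (fun f => f i)).prod) := by
  induction L with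
  | nil => simp
  | cons f L ih =>
    simp only [List.map_cons, List.prod_cons, ih, Matrix.diagonal_mul_diagonal]

lemma pauliAt_sigmaZ_diagonal (M : ℕ) (n : Fin M) :
    pauliAt M sigmaZ n = Matrix.diagonal (fun s : Spins M => sigmaZ (s n) (s n)) := by
  funext s t
  by_cases h : s = t
  · subst h; simp [pauliAt, Matrix.diagonal]
  · rw [Matrix.diagonal_apply_ne _ h]
    simp only [pauliAt]
    by_cases h2 : ∀ k, k ≠ n → s k = t k
    · have hne : s n ≠ t n := by
        intro he; apply h; funext k
        by_cases hk : k = n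
        · subst hk; exact he
        · exact h2 k hk
      rw [if_pos h2, mul_one]
      have : ∀ a b : Fin 2, a ≠ b → sigmaZ a b = 0 := by
        intro a b hab; fin_cases a <;> fin_cases b <;> simp_all [sigmaZ]
      exact this _ _ hne
    · rw [if_neg h2, mul_zero]

lemma Qop_diag (M : ℕ) (κ : ℂ) (i j : ℕ) :
    Qop M κ i j = Matrix.diagonal (fun s : Spins M =>
      ∏ n ∈ Finset.univ.filter (fun n : Fin M => i ≤ n.val + 1 ∧ n.val + 1 ≤ j),
        ((1 + κ)/2 + (1 - κ)/2 * sigmaZ (s n) (s n))) := by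
  unfold Qop
  have hfac : ∀ n : Fin M,
      ((1 + κ)/2) • (1 : Matrix (Spins M) (Spins M) ℂ) + ((1 - κ)/2) • pauliAt M sigmaZ n =
      Matrix.diagonal (fun s : Spins M => (1 + κ)/2 + (1 - κ)/2 * sigmaZ (s n) (s n)) := by
    intro n
    rw [pauliAt_sigmaZ_diagonal, ← Matrix.diagonal_one, ← Matrix.diagonal_smul,
      ← Matrix.diagonal_smul, Matrix.diagonal_add]
    apply congrArg Matrix.diagonal; funext s; simp [smul_eq_mul]
  simp only [hfac]
  rw [show (fun n : Fin M => Matrix.diagonal (fun s : Spins M => (1 + κ)/2 + (1 - κ)/2 * sigmaZ (s n) (s n)))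
      = (Matrix.diagonal ∘ fun n (s : Spins M) => (1 + κ)/2 + (1 - κ)/2 * sigmaZ (s n) (s n)) from rfl,
    ← List.map_map, diag_list_prod]
  apply congrArg Matrix.diagonal
  funext s
  rw [List.map_map, Finset.prod_eq_multiset_prod,
    ← Finset.sort_eq (r := (· ≤ ·)) (s := Finset.univ.filter (fun n : Fin M => i ≤ n.val + 1 ∧ n.val + 1 ≤ j)),
    Multiset.map_coe, Multiset.prod_coe]
  rfl

open Polynomial in
def Pq' (M : ℕ) (s : Spins M) (n : Fin M) : ℂ[X] :=
  C ((1:ℂ)/2) * (1 + X) + C (sigmaZ (s n) (s n) / 2) * (1 - X)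

open Polynomial in
def Pent' (M m : ℕ) (n0 nm : Fin M) (s : Spins M) : ℂ[X] :=
  (X - C 1)^2 * (C ((1 - sigmaZ (s n0) (s n0)) * (1 - sigmaZ (s nm) (s nm)) / 4) *
    ∏ n ∈ Finset.univ.filter (fun n : Fin M => 2 ≤ n.val + 1 ∧ n.val + 1 ≤ m), Pq' M s n)

open Polynomial in
def Ment' (M m : ℕ) (n0 nm : Fin M) (s t : Spins M) : ℂ[X] :=
  if s = t then Pent' M m n0 nm s else 0

set_option maxHeartbeats 1000000 in
open Polynomial in
/-- The combination `Q^κ_{1,m+1} - Q^κ_{1,m} - Q^κ_{2,m+1} + Q^κ_{2,m}` is a polynomial in `κ`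
with operator coefficients, and its second `κ`-derivative at `κ = 1` equals
`(1/2)(1-σ^z_1)(1-σ^z_{m+1})`. -/
theorem second_kappa_derivative_of_generating_operator (M : ℕ) (hM : 2 ≤ M)
    (m : ℕ) (hm1 : 1 ≤ m) (hm : m ≤ M - 1) :
    ∃ (d : ℕ) (P : ℕ → Matrix (Spins M) (Spins M) ℂ),
      (∀ κ : ℂ,
        Qop M κ 1 (m + 1) - Qop M κ 1 m - Qop M κ 2 (m + 1) + Qop M κ 2 m =
          ∑ k ∈ Finset.range (d + 1), κ ^ k • P k) ∧
      (∀ s t : Spins M,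
        iteratedDeriv 2
            (fun κ : ℂ =>
              (Qop M κ 1 (m + 1) - Qop M κ 1 m - Qop M κ 2 (m + 1) + Qop M κ 2 m) s t) 1 =
          (((1 : ℂ) / 2) •
            ((1 - pauliAt M sigmaZ ⟨0, by omega⟩) * (1 - pauliAt M sigmaZ ⟨m, by omega⟩)))
            s t) := by
  have hmM : m < M := by omega
  have h0M : 0 < M := by omega
  have h0S2 : (⟨0, h0M⟩ : Fin M) ∉
      Finset.univ.filter (fun n : Fin M => 2 ≤ n.val + 1 ∧ n.val + 1 ≤ m) := by simp
  have hmS2 : (⟨m, hmM⟩ : Fin M) ∉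
      Finset.univ.filter (fun n : Fin M => 2 ≤ n.val + 1 ∧ n.val + 1 ≤ m) := by simp
  have h0ins : (⟨0, h0M⟩ : Fin M) ∉ insert (⟨m, hmM⟩ : Fin M)
      (Finset.univ.filter (fun n : Fin M => 2 ≤ n.val + 1 ∧ n.val + 1 ≤ m)) := by
    simp [Finset.mem_insert, Fin.ext_iff]; omega
  have hins1 : Finset.univ.filter (fun n : Fin M => 1 ≤ n.val + 1 ∧ n.val + 1 ≤ m + 1)
      = insert (⟨0, h0M⟩ : Fin M) (insert (⟨m, hmM⟩ : Fin M)
        (Finset.univ.filter (fun n : Fin M => 2 ≤ n.val + 1 ∧ n.val + 1 ≤ m))) := by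
    ext n; simp [Finset.mem_insert, Fin.ext_iff]; omega
  have hins2 : Finset.univ.filter (fun n : Fin M => 1 ≤ n.val + 1 ∧ n.val + 1 ≤ m)
      = insert (⟨0, h0M⟩ : Fin M)
        (Finset.univ.filter (fun n : Fin M => 2 ≤ n.val + 1 ∧ n.val + 1 ≤ m)) := by
    ext n; simp [Finset.mem_insert, Fin.ext_iff]; omega
  have hins3 : Finset.univ.filter (fun n : Fin M => 2 ≤ n.val + 1 ∧ n.val + 1 ≤ m + 1)
      = insert (⟨m, hmM⟩ : Fin M)
        (Finset.univ.filter (fun n : Fin M => 2 ≤ n.val + 1 ∧ n.val + 1 ≤ m)) := by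
    ext n; simp [Finset.mem_insert, Fin.ext_iff]; omega
  have hevalPq : ∀ (κ : ℂ) (s : Spins M) (n : Fin M),
      (Pq' M s n).eval κ = (1 + κ)/2 + (1 - κ)/2 * sigmaZ (s n) (s n) := by
    intro κ s n; simp [Pq']; ring
  have hkey : ∀ (κ : ℂ) (s t : Spins M),
      (Qop M κ 1 (m + 1) - Qop M κ 1 m - Qop M κ 2 (m + 1) + Qop M κ 2 m) s t
        = (Ment' M m ⟨0, h0M⟩ ⟨m, hmM⟩ s t).eval κ := by
    intro κ s t
    rw [Qop_diag, Qop_diag, Qop_diag, Qop_diag]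
    by_cases hst : s = t
    · subst hst
      simp only [Matrix.sub_apply, Matrix.add_apply, Matrix.diagonal_apply_eq, Ment',
        if_pos rfl, if_true]
      rw [hins1, hins2, hins3,
        Finset.prod_insert h0ins, Finset.prod_insert hmS2, Finset.prod_insert h0S2]
      simp only [Pent', eval_mul, eval_pow, eval_sub, eval_X, eval_C, eval_prod, eval_one]
      rw [show (∏ n ∈ Finset.univ.filter (fun n : Fin M => 2 ≤ n.val + 1 ∧ n.val + 1 ≤ m),
            (Pq' M s n).eval κ)
          = ∏ n ∈ Finset.univ.filter (fun n : Fin M => 2 ≤ n.val + 1 ∧ n.val + 1 ≤ m),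
            ((1 + κ)/2 + (1 - κ)/2 * sigmaZ (s n) (s n)) from
        Finset.prod_congr rfl (fun n _ => hevalPq κ s n)]
      ring
    · simp only [Matrix.sub_apply, Matrix.add_apply, Matrix.diagonal_apply_ne _ hst, Ment',
        if_neg hst, eval_zero]
      ring
  refine ⟨Finset.univ.sup (fun st : Spins M × Spins M =>
      (Ment' M m ⟨0, h0M⟩ ⟨m, hmM⟩ st.1 st.2).natDegree),
    fun k => fun s t => (Ment' M m ⟨0, h0M⟩ ⟨m, hmM⟩ s t).coeff k, ?_, ?_⟩
  · intro κ
    funext s t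
    rw [hkey κ s t]
    have h2 := Finset.le_sup (f := fun st : Spins M × Spins M =>
        (Ment' M m ⟨0, h0M⟩ ⟨m, hmM⟩ st.1 st.2).natDegree) (Finset.mem_univ (s, t))
    have hd : (Ment' M m ⟨0, h0M⟩ ⟨m, hmM⟩ s t).natDegree <
        Finset.univ.sup (fun st : Spins M × Spins M =>
          (Ment' M m ⟨0, h0M⟩ ⟨m, hmM⟩ st.1 st.2).natDegree) + 1 :=
      Nat.lt_add_one_iff.mpr h2
    rw [Polynomial.eval_eq_sum_range' hd]
    simp only [Matrix.sum_apply, Matrix.smul_apply, smul_eq_mul]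
    exact Finset.sum_congr rfl (fun k _ => mul_comm _ _)
  · intro s t
    have hfun : (fun κ : ℂ =>
        (Qop M κ 1 (m + 1) - Qop M κ 1 m - Qop M κ 2 (m + 1) + Qop M κ 2 m) s t)
        = fun κ : ℂ => (Ment' M m ⟨0, h0M⟩ ⟨m, hmM⟩ s t).eval κ := funext fun κ => hkey κ s t
    rw [hfun]
    by_cases hst : s = t
    · subst hst
      rw [show Ment' M m ⟨0, h0M⟩ ⟨m, hmM⟩ s s = Pent' M m ⟨0, h0M⟩ ⟨m, hmM⟩ s from if_pos rfl]
      unfold Pent'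
      rw [iteratedDeriv_two_sq_mul]
      have hev1 : ∀ n : Fin M, (Pq' M s n).eval 1 = 1 := by
        intro n; rw [hevalPq]; ring
      rw [eval_mul, eval_C, eval_prod]
      rw [show (∏ n ∈ Finset.univ.filter (fun n : Fin M => 2 ≤ n.val + 1 ∧ n.val + 1 ≤ m),
          (Pq' M s n).eval 1) = 1 from Finset.prod_eq_one (fun n _ => hev1 n)]
      rw [pauliAt_sigmaZ_diagonal, pauliAt_sigmaZ_diagonal]
      rw [show (1 : Matrix (Spins M) (Spins M) ℂ) = Matrix.diagonal (fun _ => 1) from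
        (Matrix.diagonal_one).symm]
      rw [Matrix.diagonal_sub, Matrix.diagonal_sub, Matrix.diagonal_mul_diagonal,
        ← Matrix.diagonal_smul, Matrix.diagonal_apply_eq]
      simp only [Pi.smul_apply, Pi.mul_apply, Pi.sub_apply, smul_eq_mul]
      ring
    · rw [show Ment' M m ⟨0, h0M⟩ ⟨m, hmM⟩ s t = 0 from if_neg hst]
      have h0 : (fun κ : ℂ => (0 : ℂ[X]).eval κ)
          = fun κ : ℂ => (((X : ℂ[X]) - C 1)^2 * 0).eval κ := by simp
      rw [h0, iteratedDeriv_two_sq_mul]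
      rw [pauliAt_sigmaZ_diagonal, pauliAt_sigmaZ_diagonal]
      rw [show (1 : Matrix (Spins M) (Spins M) ℂ) = Matrix.diagonal (fun _ => 1) from
        (Matrix.diagonal_one).symm]
      rw [Matrix.diagonal_sub, Matrix.diagonal_sub, Matrix.diagonal_mul_diagonal,
        ← Matrix.diagonal_smul, Matrix.diagonal_apply_ne _ hst]
      simp

end
end

section
/- Let κ ∈ ℂ, n ≥ 2, and let λ1,…,λn, μ1,…,μn ∈ ℂ satisfy sinh(λj−μk) ≠ 0, sinh(λj−μk+η) ≠ 0 and sinh(μk−λj+η) ≠ 0 for all j,k. Suppose there exist indices a ≠ b in {1,…,n} and p ∈ {1,…,M} such that μa = ξp and μb = ξp − η. Then det_n Ω_κ({λ},{μ}|{λ}) = 0. -/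
open Complex Matrix BigOperators

noncomputable section

/-- If the set `{μ}` contains a pair `μ_a = ξ_p`, `μ_b = ξ_p - η`, then
`det Ω_κ({λ},{μ}|{λ}) = 0`. -/
theorem det_Omega_vanishes_on_pair (M : ℕ) (η : ℂ) (ξ : Fin M → ℂ) (κ : ℂ)
    (n : ℕ) (hn : 2 ≤ n) (lam mu : Fin n → ℂ)
    (h1 : ∀ j k : Fin n, Complex.sinh (lam j - mu k) ≠ 0)
    (h2 : ∀ j k : Fin n, Complex.sinh (lam j - mu k + η) ≠ 0)
    (h3 : ∀ j k : Fin n, Complex.sinh (mu k - lam j + η) ≠ 0)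
    (a b : Fin n) (hab : a ≠ b) (p : Fin M)
    (ha : mu a = ξ p) (hb : mu b = ξ p - η) :
    (Omega M η ξ κ lam mu lam).det = 0 := by
  -- the two distinguished columns are proportional to `j ↦ tfun η (lam j) (mu a)`
  set f : Fin n → ℂ := fun j => tfun η (lam j) (mu a) with hf
  have hdFa : dF M ξ (mu a) = 0 := by
    unfold dF
    refine Finset.prod_eq_zero (Finset.mem_univ p) ?_
    rw [ha]
    simp
  have haFb : aF M η ξ (mu b) = 0 := by
    unfold aF
    refine Finset.prod_eq_zero (Finset.mem_univ p) ?_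
    rw [hb]
    rw [show ξ p - η - ξ p + η = 0 by ring]
    simp
  have htfun : ∀ j : Fin n, tfun η (mu b) (lam j) = f j := by
    intro j
    simp only [hf, tfun]
    rw [ha, hb]
    rw [show ξ p - η - lam j = -(lam j - ξ p + η) by ring,
      show -(lam j - ξ p + η) + η = -(lam j - ξ p) by ring,
      Complex.sinh_neg, Complex.sinh_neg]
    ring
  set c1 : ℂ := aF M η ξ (mu a) * ∏ a', Complex.sinh (lam a' - mu a + η) with hc1
  set c2 : ℂ := -κ * dF M ξ (mu b) * ∏ a', Complex.sinh (lam a' - mu a) with hc2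
  have hcolA : ∀ j : Fin n, Omega M η ξ κ lam mu lam j a = c1 * f j := by
    intro j
    simp only [Omega, hdFa, hc1, hf]
    ring
  have hcolB : ∀ j : Fin n, Omega M η ξ κ lam mu lam j b = c2 * f j := by
    intro j
    have hprod : (∏ a', Complex.sinh (lam a' - mu b - η)) =
        ∏ a', Complex.sinh (lam a' - mu a) := by
      refine Finset.prod_congr rfl fun a' _ => ?_
      rw [ha, hb]
      ring_nf
    simp only [Omega, haFb, hc2, htfun j]
    rw [hprod]
    ring
  by_cases hc1z : c1 = 0
  · refine Matrix.det_eq_zero_of_column_eq_zero a fun i => ?_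
    rw [hcolA i, hc1z, zero_mul]
  · have hupd : Omega M η ξ κ lam mu lam =
        (Omega M η ξ κ lam mu lam).updateCol b
          ((c2 / c1) • fun j => Omega M η ξ κ lam mu lam j a) := by
      funext i j
      by_cases hjb : j = b
      · subst hjb
        rw [Matrix.updateCol_apply, if_pos rfl]
        simp only [Pi.smul_apply, smul_eq_mul]
        rw [hcolB i, hcolA i]
        field_simp
      · rw [Matrix.updateCol_apply, if_neg hjb]
    rw [hupd, Matrix.det_updateCol_smul,
      Matrix.det_updateCol_eq_zero hab, mul_zero]

end
end
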